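/- arXiv:1902.10620 — 5 statements merged into one kernel-verified Lean document; each statement's English description precedes it below -/
import Mathlib

section
/- Let X and Y be Banach spaces, let d ≥ 1, and let K : ℝ^d × ℝ^d → 𝓛(X,Y) be strongly measurable and satisfy the (ω,2)-Dini condition for a modulus ω with Dini constant ‖ω‖. Then there exists a constant C depending only on d such that K satisfies the 2-Hörmander condition with constant C·‖ω‖; that is, for every ball B(c,r) ⊆ ℝ^d one has (∫_{ℝ^d∖B(c,r)} ‖K(s,t)−K(s',t)‖² dt)^{1/2} ≤ C‖ω‖ for all s, s' ∈ B(c,r/2), and (∫_{ℝ^d∖B(c,r)} ‖K(s,t)−K(s,t')‖² ds)^{1/2} ≤ C‖ω‖ for all t, t' ∈ B(c,r/2). -/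
open MeasureTheory ENNReal Metric Set

noncomputable section

/-- `ℝ^d` with the Euclidean norm (and Lebesgue measure). -/
abbrev Ed (d : ℕ) : Type := EuclideanSpace ℝ (Fin d)

/-- Strong measurability of an operator-valued kernel: `(s,t) ↦ K s t x` is strongly
measurable for every `x`. -/
def smK {d : ℕ} {X Y : Type} [NormedAddCommGroup X] [NormedSpace ℝ X]
    [NormedAddCommGroup Y] [NormedSpace ℝ Y]
    (K : Ed d → Ed d → (X →L[ℝ] Y)) : Prop :=
  ∀ x : X, StronglyMeasurable (fun p : Ed d × Ed d => K p.1 p.2 x)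

/-- The square function `S_K f (s) = (∫ ‖K(s,t) f(t)‖² dt)^{1/2}`, valued in `ℝ≥0∞`. -/
def sqFn {d : ℕ} {X Y : Type} [NormedAddCommGroup X] [NormedSpace ℝ X]
    [NormedAddCommGroup Y] [NormedSpace ℝ Y]
    (K : Ed d → Ed d → (X →L[ℝ] Y)) (f : Ed d → X) (s : Ed d) : ℝ≥0∞ :=
  (∫⁻ t, (‖K s t (f t)‖₊ : ℝ≥0∞) ^ (2:ℝ)) ^ ((1:ℝ)/2)

/-- Weak `L^p` boundedness of the square function operator, with constant `A`:
`λ·|{S_K f > λ}|^{1/p} ≤ A‖f‖_{L^p}`. -/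
def weakBdd {d : ℕ} {X Y : Type} [NormedAddCommGroup X] [NormedSpace ℝ X]
    [NormedAddCommGroup Y] [NormedSpace ℝ Y]
    (K : Ed d → Ed d → (X →L[ℝ] Y)) (p A : ℝ) : Prop :=
  ∀ f : Ed d → X, AEStronglyMeasurable f volume → ∀ lam : ℝ, 0 < lam →
    ENNReal.ofReal lam * (volume {s | ENNReal.ofReal lam < sqFn K f s}) ^ ((1:ℝ)/p)
      ≤ ENNReal.ofReal A * eLpNorm f (ENNReal.ofReal p) volume

/-- Strong `L^q` boundedness of the square function operator, with constant `C`: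
`‖S_K f‖_{L^q} ≤ C‖f‖_{L^q}`. -/
def strongBdd {d : ℕ} {X Y : Type} [NormedAddCommGroup X] [NormedSpace ℝ X]
    [NormedAddCommGroup Y] [NormedSpace ℝ Y]
    (K : Ed d → Ed d → (X →L[ℝ] Y)) (q C : ℝ) : Prop :=
  ∀ f : Ed d → X, AEStronglyMeasurable f volume →
    (∫⁻ s, sqFn K f s ^ q) ^ ((1:ℝ)/q)
      ≤ ENNReal.ofReal C * eLpNorm f (ENNReal.ofReal q) volume

/-- The `2`-Hörmander condition with constant `H`. -/
def horm2 {d : ℕ} {X Y : Type} [NormedAddCommGroup X] [NormedSpace ℝ X]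
    [NormedAddCommGroup Y] [NormedSpace ℝ Y]
    (K : Ed d → Ed d → (X →L[ℝ] Y)) (H : ℝ) : Prop :=
  ∀ (c : Ed d) (r : ℝ), 0 < r →
    (∀ s s' : Ed d, s ∈ ball c (r/2) → s' ∈ ball c (r/2) →
      (∫⁻ t in (ball c r)ᶜ, (‖K s t - K s' t‖₊ : ℝ≥0∞) ^ (2:ℝ)) ^ ((1:ℝ)/2)
        ≤ ENNReal.ofReal H) ∧
    (∀ t t' : Ed d, t ∈ ball c (r/2) → t' ∈ ball c (r/2) →
      (∫⁻ s in (ball c r)ᶜ, (‖K s t - K s t'‖₊ : ℝ≥0∞) ^ (2:ℝ)) ^ ((1:ℝ)/2)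
        ≤ ENNReal.ofReal H)

/-- A modulus: increasing on `[0,1]`, subadditive, vanishing at `0`. -/
def IsModulus (ω : ℝ → ℝ) : Prop :=
  MonotoneOn ω (Icc (0:ℝ) 1) ∧ ω 0 = 0 ∧
    ∀ a b : ℝ, 0 ≤ a → 0 ≤ b → a + b ≤ 1 → ω (a + b) ≤ ω a + ω b

/-- `Dn` is the Dini constant `(∫₀¹ ω(r)² dr/r)^{1/2}` of the modulus `ω`. -/
def HasDiniConst (ω : ℝ → ℝ) (Dn : ℝ) : Prop :=
  0 ≤ Dn ∧ ∫⁻ r in Ioc (0:ℝ) 1, ENNReal.ofReal ((ω r)^2 / r) = ENNReal.ofReal (Dn ^ 2)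

/-- The `(ω,2)`-Dini condition for a kernel `K` on `ℝ^d × ℝ^d`. -/
def dini2 {d : ℕ} {X Y : Type} [NormedAddCommGroup X] [NormedSpace ℝ X]
    [NormedAddCommGroup Y] [NormedSpace ℝ Y]
    (K : Ed d → Ed d → (X →L[ℝ] Y)) (ω : ℝ → ℝ) : Prop :=
  (∀ s s' t : Ed d, s ≠ t → dist s s' ≤ dist s t / 2 →
      ‖K s t - K s' t‖ ≤ ω (dist s s' / dist s t) * dist s t ^ (-(d:ℝ)/2)) ∧
  (∀ s t t' : Ed d, s ≠ t → dist t t' ≤ dist s t / 2 →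
      ‖K s t - K s t'‖ ≤ ω (dist t t' / dist s t) * dist s t ^ (-(d:ℝ)/2))

/-- Axis-parallel (closed) cube with corner `a` and side length `h`. -/
def cube {d : ℕ} (a : Ed d) (h : ℝ) : Set (Ed d) :=
  {x | ∀ i, x i ∈ Icc (a i) (a i + h)}

/-- `Wc` is an upper bound for the Muckenhoupt `A_r` characteristic of the weight `w`. -/
def ApBound {d : ℕ} (w : Ed d → ℝ) (r : ℝ) (Wc : ℝ) : Prop :=
  ∀ (a : Ed d) (h : ℝ), 0 < h →
    ((volume (cube a h))⁻¹ * ∫⁻ s in cube a h, ENNReal.ofReal (w s)) *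
      (((volume (cube a h))⁻¹ *
        ∫⁻ s in cube a h, ENNReal.ofReal (w s) ^ (-(1:ℝ)/(r - 1))) ^ (r - 1))
      ≤ ENNReal.ofReal Wc

/-- The maximal operator `M₂` applied to `‖f‖`: `M₂(‖f‖)(s) = sup_{B ∋ s} (⨍_B ‖f‖²)^{1/2}`. -/
def M2 {d : ℕ} {X : Type} [NormedAddCommGroup X] (f : Ed d → X) (s : Ed d) : ℝ≥0∞ :=
  ⨆ (c : Ed d) (r : ℝ) (_ : 0 < r) (_ : s ∈ ball c r),
    ((volume (ball c r))⁻¹ * ∫⁻ t in ball c r, (‖f t‖₊ : ℝ≥0∞) ^ (2:ℝ)) ^ ((1:ℝ)/2)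

lemma modulus_nonneg {ω : ℝ → ℝ} (hω : IsModulus ω) {x : ℝ} (hx : x ∈ Icc (0:ℝ) 1) :
    0 ≤ ω x := by
  have h := hω.1 (left_mem_Icc.mpr zero_le_one) hx hx.1
  rwa [hω.2.1] at h

lemma sum_dini {ω : ℝ → ℝ} {Dn : ℝ} (hω : IsModulus ω) (hD : HasDiniConst ω Dn) :
    ∑' j : ℕ, ENNReal.ofReal (ω (((2:ℝ)^(j+1))⁻¹)^2) ≤ 2 * ENNReal.ofReal (Dn^2) := by
  set I : ℕ → Set ℝ := fun j => Ioc (((2:ℝ)^(j+1))⁻¹) (((2:ℝ)^j)⁻¹) with hI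
  have hbmem : ∀ j : ℕ, (((2:ℝ)^(j+1))⁻¹) ∈ Icc (0:ℝ) 1 := by
    intro j
    constructor
    · positivity
    · rw [inv_le_one_iff₀]
      right
      exact one_le_pow₀ one_le_two
  have hxmem : ∀ j : ℕ, ∀ x ∈ I j, x ∈ Icc (0:ℝ) 1 := by
    intro j x hx
    refine ⟨le_of_lt (lt_of_le_of_lt (hbmem j).1 hx.1), hx.2.trans ?_⟩
    rw [inv_le_one_iff₀]; right; exact one_le_pow₀ one_le_two
  have key : ∀ j : ℕ, ENNReal.ofReal (ω (((2:ℝ)^(j+1))⁻¹)^2)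
      ≤ 2 * ∫⁻ x in I j, ENNReal.ofReal ((ω x)^2 / x) := by
    intro j
    set b := (((2:ℝ)^(j+1))⁻¹) with hb
    have hbpos : 0 < b := by positivity
    have h1 : ∫⁻ x in I j, (ENNReal.ofReal (ω b ^ 2 * 2^j))
        ≤ ∫⁻ x in I j, ENNReal.ofReal ((ω x)^2 / x) := by
      refine setLIntegral_mono_ae' measurableSet_Ioc (ae_of_all _ fun x hx => ?_)
      refine ENNReal.ofReal_le_ofReal ?_
      have hxI := hx
      have hx1 : b < x := hxI.1
      have hx2 : x ≤ ((2:ℝ)^j)⁻¹ := hxI.2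
      have hωb : 0 ≤ ω b := modulus_nonneg hω (hbmem j)
      have hmono : ω b ≤ ω x := hω.1 (hbmem j) (hxmem j x hx) hx1.le
      have hsq : ω b ^ 2 ≤ ω x ^ 2 := pow_le_pow_left₀ hωb hmono 2
      have hxpos : 0 < x := hbpos.trans hx1
      have hinv : (2:ℝ)^j ≤ x⁻¹ := by
        rw [le_inv_comm₀ (by positivity) hxpos]
        exact hx2
      calc ω b ^ 2 * 2^j ≤ ω x ^ 2 * x⁻¹ :=
            mul_le_mul hsq hinv (by positivity) (sq_nonneg _)
        _ = ω x ^ 2 / x := by rw [div_eq_mul_inv]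
    have hvol : volume (I j) = ENNReal.ofReal b := by
      rw [hI]
      simp only [Real.volume_Ioc]
      congr 1
      rw [hb, pow_succ]
      have : (2:ℝ)^j ≠ 0 := by positivity
      field_simp
      norm_num
    rw [setLIntegral_const, hvol, ← ENNReal.ofReal_mul (by positivity)] at h1
    have heq : ω b ^ 2 * 2 ^ j * b = ω b ^ 2 / 2 := by
      rw [hb, pow_succ]
      have : (2:ℝ)^j ≠ 0 := by positivity
      field_simp
      ring
    rw [heq] at h1
    calc ENNReal.ofReal (ω b ^ 2) = 2 * ENNReal.ofReal (ω b ^ 2 / 2) := by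
          rw [← ENNReal.ofReal_ofNat 2, ← ENNReal.ofReal_mul (by norm_num)]
          congr 1
          ring
      _ ≤ 2 * ∫⁻ x in I j, ENNReal.ofReal ((ω x)^2 / x) := by
          exact _root_.mul_le_mul_right h1 2
  calc ∑' j : ℕ, ENNReal.ofReal (ω (((2:ℝ)^(j+1))⁻¹)^2)
      ≤ ∑' j : ℕ, 2 * ∫⁻ x in I j, ENNReal.ofReal ((ω x)^2 / x) :=
        ENNReal.tsum_le_tsum key
    _ = 2 * ∑' j : ℕ, ∫⁻ x in I j, ENNReal.ofReal ((ω x)^2 / x) :=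
        ENNReal.tsum_mul_left
    _ = 2 * ∫⁻ x in ⋃ j, I j, ENNReal.ofReal ((ω x)^2 / x) := by
        rw [lintegral_iUnion (fun j => measurableSet_Ioc) ?_]
        intro j k hjk
        have hgen : ∀ j k : ℕ, j < k → Disjoint (I j) (I k) := by
          intro j k hjk
          refine Set.disjoint_left.mpr fun x hxj hxk => ?_
          have h1 : ((2:ℝ)^k)⁻¹ ≤ ((2:ℝ)^(j+1))⁻¹ := by
            apply inv_anti₀ (by positivity)
            exact pow_le_pow_right₀ one_le_two hjk
          exact absurd (hxk.2.trans h1) (not_le.mpr hxj.1)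
        rcases (Nat.lt_or_gt_of_ne hjk) with h | h
        · exact hgen j k h
        · exact (hgen k j h).symm
    _ ≤ 2 * ∫⁻ x in Ioc (0:ℝ) 1, ENNReal.ofReal ((ω x)^2 / x) := by
        refine _root_.mul_le_mul_right (lintegral_mono_set ?_) 2
        refine Set.iUnion_subset fun j x hx => ?_
        exact ⟨lt_of_le_of_lt (hbmem j).1 hx.1, (hxmem j x hx).2⟩
    _ = 2 * ENNReal.ofReal (Dn^2) := by rw [hD.2]

lemma ed_nontrivial (d : ℕ) (hd : 1 ≤ d) : Nontrivial (Ed d) := by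
  obtain ⟨m, rfl⟩ : ∃ m, d = m + 1 := ⟨d-1, (Nat.succ_pred_eq_of_pos hd).symm⟩
  infer_instance

lemma annuli (d : ℕ) (hd : 1 ≤ d) {ω : ℝ → ℝ} {Dn : ℝ} (hω : IsModulus ω)
    (hD : HasDiniConst ω Dn) (c : Ed d) {r : ℝ} (hr : 0 < r) :
    ∫⁻ t in (ball c r)ᶜ, ENNReal.ofReal (ω (r / (2 * dist t c))^2 * (dist t c) ^ (-(d:ℝ))) ≤
      ENNReal.ofReal (2^d) * volume (ball (0:Ed d) 1) * (2 * ENNReal.ofReal (Dn^2)) := by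
  haveI := ed_nontrivial d hd
  set V := volume (ball (0:Ed d) 1) with hV
  set A : ℕ → Set (Ed d) := fun j => ball c (2^(j+1)*r) \ ball c (2^j*r) with hA
  have hcover : (ball c r)ᶜ ⊆ ⋃ j, A j := by
    intro t ht
    have hrt : r ≤ dist t c := by
      by_contra h
      exact ht (mem_ball.mpr (not_le.mp h))
    have hex : ∃ j : ℕ, dist t c < 2^(j+1)*r := by
      obtain ⟨n, hn⟩ := pow_unbounded_of_one_lt (dist t c / r) one_lt_two
      refine ⟨n, ?_⟩
      rw [div_lt_iff₀ hr] at hn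
      calc dist t c < 2^n * r := by linarith [hn]
        _ ≤ 2^(n+1)*r := by
            have : (2:ℝ)^n ≤ 2^(n+1) := pow_le_pow_right₀ one_le_two (Nat.le_succ n)
            nlinarith
    refine Set.mem_iUnion.mpr ⟨Nat.find hex, mem_ball.mpr (Nat.find_spec hex), fun hmem => ?_⟩
    rw [mem_ball] at hmem
    rcases Nat.eq_zero_or_pos (Nat.find hex) with h0 | hpos
    · rw [h0, pow_zero, one_mul] at hmem
      exact absurd hrt (not_le.mpr hmem)
    · have hlt : Nat.find hex - 1 < Nat.find hex := Nat.sub_lt hpos one_pos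
      have := Nat.find_min hex hlt
      have h3 : Nat.find hex - 1 + 1 = Nat.find hex := by omega
      rw [h3] at this
      exact this hmem
  have hper : ∀ j : ℕ, ∫⁻ t in A j,
      ENNReal.ofReal (ω (r / (2 * dist t c))^2 * (dist t c) ^ (-(d:ℝ)))
      ≤ ENNReal.ofReal (ω (((2:ℝ)^(j+1))⁻¹)^2) * (ENNReal.ofReal (2^d) * V) := by
    intro j
    set b := (((2:ℝ)^(j+1))⁻¹) with hb
    have hbmem : b ∈ Icc (0:ℝ) 1 := by
      constructor
      · positivity
      · rw [hb, inv_le_one_iff₀]; right; exact one_le_pow₀ one_le_two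
    have haj : (2:ℝ)^j * r > 0 := by positivity
    have hstep : ∀ t ∈ A j, ENNReal.ofReal (ω (r / (2 * dist t c))^2 * (dist t c) ^ (-(d:ℝ)))
        ≤ ENNReal.ofReal (ω b ^ 2 * ((2:ℝ)^j * r) ^ (-(d:ℝ))) := by
      intro t ht
      have h1 : (2:ℝ)^j * r ≤ dist t c := by
        have := ht.2
        rw [mem_ball] at this
        exact not_lt.mp this
      have hD0 : 0 < dist t c := lt_of_lt_of_le haj h1
      refine ENNReal.ofReal_le_ofReal ?_
      have hratio : r / (2 * dist t c) ≤ b := by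
        have h2 : (2:ℝ)^(j+1) * r ≤ 2 * dist t c := by
          rw [pow_succ]; nlinarith
        have : r / (2 * dist t c) ≤ r / ((2:ℝ)^(j+1) * r) :=
          div_le_div_of_nonneg_left hr.le (by positivity) h2
        refine this.trans (le_of_eq ?_)
        rw [hb]
        field_simp
      have hratmem : r / (2 * dist t c) ∈ Icc (0:ℝ) 1 :=
        ⟨by positivity, le_trans hratio hbmem.2⟩
      have hω1 : ω (r / (2 * dist t c)) ≤ ω b := hω.1 hratmem hbmem hratio
      have hω0 : 0 ≤ ω (r / (2 * dist t c)) := modulus_nonneg hω hratmem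
      have hsq : ω (r / (2 * dist t c))^2 ≤ ω b ^ 2 := pow_le_pow_left₀ hω0 hω1 2
      have hrpow : (dist t c) ^ (-(d:ℝ)) ≤ ((2:ℝ)^j * r) ^ (-(d:ℝ)) := by
        refine Real.rpow_le_rpow_of_nonpos haj h1 ?_
        simp
      exact mul_le_mul hsq hrpow (Real.rpow_nonneg hD0.le _) (sq_nonneg _)
    have hvol : volume (A j) ≤ ENNReal.ofReal (((2:ℝ)^(j+1) * r)^d) * V := by
      calc volume (A j) ≤ volume (ball c (2^(j+1)*r)) := measure_mono diff_subset
        _ = ENNReal.ofReal (((2:ℝ)^(j+1) * r)^(Module.finrank ℝ (Ed d))) * V :=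
            Measure.addHaar_ball volume c (by positivity)
        _ = ENNReal.ofReal (((2:ℝ)^(j+1) * r)^d) * V := by
            rw [finrank_euclideanSpace_fin]
    calc ∫⁻ t in A j, ENNReal.ofReal (ω (r / (2 * dist t c))^2 * (dist t c) ^ (-(d:ℝ)))
        ≤ ∫⁻ _t in A j, ENNReal.ofReal (ω b ^ 2 * ((2:ℝ)^j * r) ^ (-(d:ℝ))) :=
          setLIntegral_mono measurable_const hstep
      _ = ENNReal.ofReal (ω b ^ 2 * ((2:ℝ)^j * r) ^ (-(d:ℝ))) * volume (A j) :=
          setLIntegral_const _ _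
      _ ≤ ENNReal.ofReal (ω b ^ 2 * ((2:ℝ)^j * r) ^ (-(d:ℝ)))
            * (ENNReal.ofReal (((2:ℝ)^(j+1) * r)^d) * V) := _root_.mul_le_mul_right hvol _
      _ = ENNReal.ofReal (ω b ^ 2) * (ENNReal.ofReal (2^d) * V) := by
          rw [← mul_assoc, ← ENNReal.ofReal_mul (by positivity)]
          have ha0 : (0:ℝ) < (2:ℝ)^j * r := haj
          have hkey : ((2:ℝ)^j * r) ^ (-(d:ℝ)) * ((2:ℝ)^(j+1) * r)^d = 2^d := by
            have h1 : ((2:ℝ)^(j+1) * r)^d = 2^d * ((2:ℝ)^j * r)^d := by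
              rw [pow_succ]
              rw [show (2:ℝ)^j * 2 * r = 2 * ((2:ℝ)^j * r) by ring, mul_pow]
            have h2 : ((2:ℝ)^j * r) ^ (-(d:ℝ)) = (((2:ℝ)^j * r)^d)⁻¹ := by
              rw [Real.rpow_neg ha0.le, Real.rpow_natCast]
            rw [h1, h2]
            have : ((2:ℝ)^j * r)^d ≠ 0 := by positivity
            field_simp
          rw [show ω b ^ 2 * ((2:ℝ)^j * r) ^ (-(d:ℝ)) * ((2:ℝ)^(j+1) * r)^d
                = ω b ^ 2 * 2^d by rw [mul_assoc, hkey],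
             ENNReal.ofReal_mul (sq_nonneg _), mul_assoc]
  calc ∫⁻ t in (ball c r)ᶜ, ENNReal.ofReal (ω (r / (2 * dist t c))^2 * (dist t c) ^ (-(d:ℝ)))
    ≤ ∫⁻ t in ⋃ j, A j, ENNReal.ofReal (ω (r / (2 * dist t c))^2 * (dist t c) ^ (-(d:ℝ))) :=
      lintegral_mono_set hcover
  _ ≤ ∑' j : ℕ, ∫⁻ t in A j, ENNReal.ofReal (ω (r / (2 * dist t c))^2 * (dist t c) ^ (-(d:ℝ))) :=
      lintegral_iUnion_le _ _
  _ ≤ ∑' j : ℕ, ENNReal.ofReal (ω (((2:ℝ)^(j+1))⁻¹)^2) * (ENNReal.ofReal (2^d) * V) :=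
      ENNReal.tsum_le_tsum hper
  _ = (∑' j : ℕ, ENNReal.ofReal (ω (((2:ℝ)^(j+1))⁻¹)^2)) * (ENNReal.ofReal (2^d) * V) :=
      ENNReal.tsum_mul_right
  _ ≤ (2 * ENNReal.ofReal (Dn^2)) * (ENNReal.ofReal (2^d) * V) :=
      _root_.mul_le_mul_left (sum_dini hω hD) _
  _ = ENNReal.ofReal (2^d) * V * (2 * ENNReal.ofReal (Dn^2)) := by ring

lemma ptwise {d : ℕ} {E : Type*} [SeminormedAddCommGroup E] {ω : ℝ → ℝ} (hω : IsModulus ω)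
    {c v : Ed d} {r : ℝ} (hr : 0 < r) (hv : r ≤ dist v c)
    {u u' : Ed d} (hu : u ∈ ball c (r/2)) (hu' : u' ∈ ball c (r/2))
    (f : Ed d → E)
    (hf : ∀ a a' : Ed d, a ≠ v → dist a a' ≤ dist a v / 2 →
      ‖f a - f a'‖ ≤ ω (dist a a' / dist a v) * dist a v ^ (-(d:ℝ)/2)) :
    ‖f u - f u'‖ ≤ 4 * (ω (r / (2 * dist v c)) * (dist v c / 2) ^ (-(d:ℝ)/2)) := by
  set D := dist v c with hD
  have hDpos : 0 < D := lt_of_lt_of_le hr hv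
  set q : ℝ → Ed d := fun θ => u + θ • (u' - u) with hq
  have hq0 : q 0 = u := by simp [hq]
  have hq1 : q 1 = u' := by simp [hq]
  have hqc : ∀ θ : ℝ, θ ∈ Icc (0:ℝ) 1 → q θ ∈ ball c (r/2) := by
    intro θ hθ
    have heq : q θ = (1-θ) • u + θ • u' := by
      rw [hq]
      simp only
      rw [sub_smul, one_smul, smul_sub]
      abel
    rw [heq]
    exact (convex_ball c (r/2)) hu hu' (by linarith [hθ.2]) hθ.1 (by ring)
  have hqv : ∀ θ : ℝ, θ ∈ Icc (0:ℝ) 1 → D / 2 ≤ dist (q θ) v := by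
    intro θ hθ
    have h1 : dist (q θ) c < r / 2 := mem_ball.mp (hqc θ hθ)
    have h2 : D ≤ dist v (q θ) + dist (q θ) c := dist_triangle v (q θ) c
    have h3 : dist v (q θ) = dist (q θ) v := dist_comm _ _
    linarith
  have hstep : ∀ θ θ' : ℝ, θ ∈ Icc (0:ℝ) 1 → θ' ∈ Icc (0:ℝ) 1 → |θ - θ'| ≤ 1/4 →
      ‖f (q θ) - f (q θ')‖ ≤ ω (r / (2 * D)) * (D / 2) ^ (-(d:ℝ)/2) := by
    intro θ θ' hθ hθ' habs
    have hqvθ := hqv θ hθ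
    have hne : q θ ≠ v := by
      have : 0 < dist (q θ) v := lt_of_lt_of_le (by linarith) hqvθ
      exact dist_pos.mp this
    have hdist : dist (q θ) (q θ') ≤ r / 4 := by
      have heq : q θ - q θ' = (θ - θ') • (u' - u) := by
        rw [hq]; simp only; rw [sub_smul]; abel
      have h1 : dist (q θ) (q θ') = |θ - θ'| * ‖u' - u‖ := by
        rw [dist_eq_norm, heq, norm_smul, Real.norm_eq_abs]
      have h2 : ‖u' - u‖ ≤ r := by
        have := dist_triangle u' c u
        have h3 : dist u' c < r/2 := mem_ball.mp hu'
        have h4 : dist c u < r/2 := by rw [dist_comm]; exact mem_ball.mp hu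
        rw [← dist_eq_norm]
        linarith
      rw [h1]
      calc |θ - θ'| * ‖u' - u‖ ≤ (1/4) * r :=
            mul_le_mul habs h2 (norm_nonneg _) (by norm_num)
        _ = r / 4 := by ring
    have hhalf : dist (q θ) (q θ') ≤ dist (q θ) v / 2 := by
      have : r / 2 ≤ D / 2 := by linarith
      linarith
    have hbound := hf (q θ) (q θ') hne hhalf
    have hratio : dist (q θ) (q θ') / dist (q θ) v ≤ r / (2 * D) := by
      have h5 : 0 < dist (q θ) v := by linarith
      have h6 : r / 4 / (D / 2) = r / (2 * D) := by
        field_simp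
        ring
      calc dist (q θ) (q θ') / dist (q θ) v ≤ (r/4) / (D/2) :=
            div_le_div₀ (by positivity) hdist (by linarith) hqvθ
        _ = r / (2 * D) := h6
    have hbig : r / (2 * D) ∈ Icc (0:ℝ) 1 :=
      ⟨by positivity, by rw [div_le_one (by positivity)]; linarith⟩
    have hratmem : dist (q θ) (q θ') / dist (q θ) v ∈ Icc (0:ℝ) 1 :=
      ⟨div_nonneg dist_nonneg dist_nonneg, hratio.trans hbig.2⟩
    have hω1 : ω (dist (q θ) (q θ') / dist (q θ) v) ≤ ω (r / (2 * D)) :=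
      hω.1 hratmem hbig hratio
    have hrpow : dist (q θ) v ^ (-(d:ℝ)/2) ≤ (D / 2) ^ (-(d:ℝ)/2) := by
      refine Real.rpow_le_rpow_of_nonpos (by positivity) hqvθ ?_
      have : (0:ℝ) ≤ (d:ℝ) := Nat.cast_nonneg d
      linarith
    calc ‖f (q θ) - f (q θ')‖ ≤ ω (dist (q θ) (q θ') / dist (q θ) v)
          * dist (q θ) v ^ (-(d:ℝ)/2) := hbound
      _ ≤ ω (r / (2 * D)) * (D / 2) ^ (-(d:ℝ)/2) :=
          mul_le_mul hω1 hrpow (Real.rpow_nonneg dist_nonneg _)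
            (modulus_nonneg hω hbig)
  have m0 : (0:ℝ) ∈ Icc (0:ℝ) 1 := by norm_num
  have m1 : (4⁻¹:ℝ) ∈ Icc (0:ℝ) 1 := by norm_num
  have m2 : (2⁻¹:ℝ) ∈ Icc (0:ℝ) 1 := by norm_num
  have m3 : (3/4:ℝ) ∈ Icc (0:ℝ) 1 := by norm_num
  have m4 : (1:ℝ) ∈ Icc (0:ℝ) 1 := by norm_num
  have t1 := hstep 0 4⁻¹ m0 m1 (by rw [abs_le]; constructor <;> norm_num)
  have t2 := hstep 4⁻¹ 2⁻¹ m1 m2 (by rw [abs_le]; constructor <;> norm_num)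
  have t3 := hstep 2⁻¹ (3/4) m2 m3 (by rw [abs_le]; constructor <;> norm_num)
  have t4 := hstep (3/4) 1 m3 m4 (by rw [abs_le]; constructor <;> norm_num)
  have htri : ‖f (q 0) - f (q 1)‖ ≤ ‖f (q 0) - f (q 4⁻¹)‖ + ‖f (q 4⁻¹) - f (q 2⁻¹)‖
      + ‖f (q 2⁻¹) - f (q (3/4))‖ + ‖f (q (3/4)) - f (q 1)‖ := by
    have a1 := norm_sub_le_norm_sub_add_norm_sub (f (q 0)) (f (q 2⁻¹)) (f (q 1))
    have a2 := norm_sub_le_norm_sub_add_norm_sub (f (q 0)) (f (q 4⁻¹)) (f (q 2⁻¹))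
    have a3 := norm_sub_le_norm_sub_add_norm_sub (f (q 2⁻¹)) (f (q (3/4))) (f (q 1))
    linarith
  rw [← hq0, ← hq1]
  linarith

lemma sqrt_bound (d : ℕ) (hd : 1 ≤ d) {ω : ℝ → ℝ} {Dn : ℝ} (hω : IsModulus ω)
    (hD : HasDiniConst ω Dn) (c : Ed d) {r : ℝ} (hr : 0 < r) (g : Ed d → ℝ)
    (hg0 : ∀ t, 0 ≤ g t)
    (hg : ∀ t, t ∉ ball c r →
      g t ≤ 4 * (ω (r / (2 * dist t c)) * (dist t c / 2) ^ (-(d:ℝ)/2))) :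
    (∫⁻ t in (ball c r)ᶜ, ENNReal.ofReal (g t) ^ (2:ℝ)) ^ ((1:ℝ)/2)
      ≤ ENNReal.ofReal ((Real.sqrt (2^(2*d+5) * (volume (ball (0:Ed d) 1)).toReal) + 1) * Dn) := by
  set V := volume (ball (0:Ed d) 1) with hV
  set T : ℝ := 2^(2*d+5) * V.toReal with hT
  set C : ℝ := Real.sqrt T + 1 with hC
  have hT0 : 0 ≤ T := by positivity
  have hC0 : 0 < C := by positivity
  have h1 : ∀ t ∈ (ball c r)ᶜ, ENNReal.ofReal (g t) ^ (2:ℝ)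
      ≤ ENNReal.ofReal ((2:ℝ)^(d+4))
        * ENNReal.ofReal (ω (r / (2 * dist t c))^2 * (dist t c) ^ (-(d:ℝ))) := by
    intro t ht
    have hvt : r ≤ dist t c := by
      by_contra h
      exact ht (mem_ball.mpr (not_le.mp h))
    have hD0 : (0:ℝ) < dist t c := lt_of_lt_of_le hr hvt
    set Dt := dist t c with hDt
    have e1 : ENNReal.ofReal (g t) ^ (2:ℝ) = ENNReal.ofReal (g t ^ 2) := by
      rw [ENNReal.ofReal_rpow_of_nonneg (hg0 t) (by norm_num)]
      congr 1
      rw [show (2:ℝ) = ((2:ℕ):ℝ) by norm_num, Real.rpow_natCast]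
    rw [e1, ← ENNReal.ofReal_mul (by positivity)]
    refine ENNReal.ofReal_le_ofReal ?_
    have hP : ((Dt/2:ℝ) ^ (-(d:ℝ)/2))^2 = (Dt/2) ^ (-(d:ℝ)) := by
      rw [← Real.rpow_natCast ((Dt/2) ^ (-(d:ℝ)/2)) 2, ← Real.rpow_mul (by positivity)]
      congr 1
      push_cast
      ring
    have hhalfpow : (Dt/2:ℝ) ^ (-(d:ℝ)) = 2^d * Dt ^ (-(d:ℝ)) := by
      rw [Real.div_rpow hD0.le (by norm_num : (0:ℝ) ≤ 2),
        Real.rpow_neg (by norm_num : (0:ℝ) ≤ 2), div_eq_mul_inv, inv_inv, Real.rpow_natCast, mul_comm]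
    calc g t ^ 2 ≤ (4 * (ω (r / (2 * Dt)) * (Dt/2) ^ (-(d:ℝ)/2)))^2 :=
          pow_le_pow_left₀ (hg0 t) (hg t ht) 2
      _ = 16 * (ω (r / (2 * Dt))^2 * ((Dt/2) ^ (-(d:ℝ)/2))^2) := by ring
      _ = (2:ℝ)^(d+4) * (ω (r / (2 * Dt))^2 * Dt ^ (-(d:ℝ))) := by
          rw [hP, hhalfpow, pow_add]
          ring
  have h2 : ∫⁻ t in (ball c r)ᶜ, ENNReal.ofReal (g t) ^ (2:ℝ)
      ≤ ENNReal.ofReal ((2:ℝ)^(d+4))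
        * ∫⁻ t in (ball c r)ᶜ, ENNReal.ofReal (ω (r / (2 * dist t c))^2 * (dist t c) ^ (-(d:ℝ))) := by
    rw [← lintegral_const_mul' _ _ ENNReal.ofReal_ne_top]
    exact setLIntegral_mono_ae' measurableSet_ball.compl (ae_of_all _ h1)
  have h3 := annuli d hd hω hD c hr
  have h4 : ∫⁻ t in (ball c r)ᶜ, ENNReal.ofReal (g t) ^ (2:ℝ)
      ≤ ENNReal.ofReal (C^2) * ENNReal.ofReal (Dn^2) := by
    refine h2.trans ((_root_.mul_le_mul_right h3 _).trans ?_)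
    have hVfin : V ≠ ⊤ := measure_ball_lt_top.ne
    have e2 : ENNReal.ofReal ((2:ℝ)^(d+4)) * (ENNReal.ofReal (2^d) * V * (2 * ENNReal.ofReal (Dn^2)))
        = (ENNReal.ofReal ((2:ℝ)^(2*d+5)) * V) * ENNReal.ofReal (Dn^2) := by
      rw [show (ENNReal.ofReal ((2:ℝ)^(d+4)) * (ENNReal.ofReal (2^d) * V * (2 * ENNReal.ofReal (Dn^2))))
          = (ENNReal.ofReal ((2:ℝ)^(d+4)) * ENNReal.ofReal ((2:ℝ)^d) * 2) * V * ENNReal.ofReal (Dn^2) by ring]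
      congr 2
      rw [← ENNReal.ofReal_mul (by positivity), ← ENNReal.ofReal_ofNat 2,
        ← ENNReal.ofReal_mul (by positivity)]
      congr 1
      rw [← pow_add, ← pow_succ]
      congr 1
      omega
    rw [e2]
    refine _root_.mul_le_mul_left ?_ _
    have e3 : ENNReal.ofReal ((2:ℝ)^(2*d+5)) * V = ENNReal.ofReal T := by
      rw [hT, ENNReal.ofReal_mul (by positivity), ENNReal.ofReal_toReal hVfin]
    rw [e3]
    refine ENNReal.ofReal_le_ofReal ?_
    nlinarith [Real.sq_sqrt hT0, Real.sqrt_nonneg T]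
  calc (∫⁻ t in (ball c r)ᶜ, ENNReal.ofReal (g t) ^ (2:ℝ)) ^ ((1:ℝ)/2)
      ≤ (ENNReal.ofReal (C^2) * ENNReal.ofReal (Dn^2)) ^ ((1:ℝ)/2) :=
        ENNReal.rpow_le_rpow h4 (by norm_num)
    _ = ENNReal.ofReal (C * Dn) := by
        rw [← ENNReal.ofReal_mul (by positivity), show C^2 * Dn^2 = (C*Dn)^2 by ring,
          ENNReal.ofReal_rpow_of_nonneg (by positivity) (by norm_num)]
        congr 1
        have hCD : (0:ℝ) ≤ C * Dn := mul_nonneg hC0.le hD.1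
        rw [← Real.rpow_natCast (C*Dn) 2, ← Real.rpow_mul hCD]
        norm_num

/-- An `(ω,2)`-Dini kernel is a `2`-Hörmander kernel, with Hörmander
constant `C(d)·‖ω‖_{Dini}`. -/
theorem statement0 (d : ℕ) (hd : 1 ≤ d) :
    ∃ C : ℝ, 0 < C ∧
      ∀ (X : Type) [NormedAddCommGroup X] [NormedSpace ℝ X] [CompleteSpace X]
        (Y : Type) [NormedAddCommGroup Y] [NormedSpace ℝ Y] [CompleteSpace Y]
        (K : Ed d → Ed d → (X →L[ℝ] Y)) (ω : ℝ → ℝ) (Dn : ℝ),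
        smK K → IsModulus ω → HasDiniConst ω Dn → dini2 K ω →
        horm2 K (C * Dn) := by
  refine ⟨Real.sqrt (2^(2*d+5) * (volume (ball (0:Ed d) 1)).toReal) + 1, by positivity, ?_⟩
  intro X _ _ _ Y _ _ _ K ω Dn _hsm hω hD hdini c r hr
  constructor
  · intro s s' hs hs'
    have hpt : ∀ t, t ∉ ball c r →
        ‖K s t - K s' t‖ ≤ 4 * (ω (r / (2 * dist t c)) * (dist t c / 2) ^ (-(d:ℝ)/2)) := by
      intro t ht
      have hvt : r ≤ dist t c := by
        by_contra h
        exact ht (mem_ball.mpr (not_le.mp h))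
      exact ptwise hω hr hvt hs hs' (fun a => K a t)
        (fun a a' hne hd2 => hdini.1 a a' t hne hd2)
    have hmain := sqrt_bound d hd hω hD c hr (fun t => ‖K s t - K s' t‖)
      (fun t => norm_nonneg _) hpt
    simpa [ofReal_norm, enorm_eq_nnnorm] using hmain
  · intro t t' ht ht'
    have hpt : ∀ s, s ∉ ball c r →
        ‖K s t - K s t'‖ ≤ 4 * (ω (r / (2 * dist s c)) * (dist s c / 2) ^ (-(d:ℝ)/2)) := by
      intro s hsmem
      have hvt : r ≤ dist s c := by
        by_contra h
        exact hsmem (mem_ball.mpr (not_le.mp h))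
      refine ptwise hω hr hvt ht ht' (fun a => K s a) ?_
      intro a a' hne hd2
      have h := hdini.2 s a a' (Ne.symm hne) (by rw [dist_comm s a]; exact hd2)
      rwa [dist_comm s a] at h
    have hmain := sqrt_bound d hd hω hD c hr (fun s => ‖K s t - K s t'‖)
      (fun s => norm_nonneg _) hpt
    simpa [ofReal_norm, enorm_eq_nnnorm] using hmain
end
end

section
/- Let X and Y be Banach spaces, let ε ∈ (0,1/2) and A₀ > 0, and let Φ : (0,∞) → 𝓛(X,Y) be strongly measurable with ‖Φ(s)‖ ≤ A₀·s^{−1/2−ε} for all s > 0. Define k : ℝ → 𝓛(X,Y) by k(s) := Γ(ε)^{−1}·∫₀^s (s−r)^{ε−1} Φ(r) dr (a convergent Bochner integral applied to each x ∈ X) for s > 0 and k(s) := 0 for s ≤ 0. Then there exists a constant C depending only on ε such that ‖k(s−t) − k(s)‖ ≤ C·A₀·(|t|/|s|)^{ε}·|s|^{−1/2} whenever |t| ≤ |s|/2 and s ≠ 0; i.e. the kernel K(s,t) := k(s−t) is an (ε,2)-standard kernel (of convolution type, d = 1). -/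
open MeasureTheory ENNReal Metric Set

noncomputable section

lemma aux_rpow_sub {p x y : ℝ} (hp0 : 0 < p) (hp1 : p ≤ 1) (hx : 0 < x) (hxy : x ≤ y) :
    x ^ (-p) - y ^ (-p) ≤ p * (y - x) * x ^ (-p - 1) := by
  have hy : 0 < y := hx.trans_le hxy
  have hs : (0:ℝ) ≤ (y - x) / x := div_nonneg (by linarith) hx.le
  have hb : ((1:ℝ) + (y - x)/x) ^ p ≤ 1 + p * ((y - x)/x) :=
    rpow_one_add_le_one_add_mul_self (by linarith) hp0.le hp1
  have h1 : (1 : ℝ) + (y - x)/x = y / x := by field_simp; ring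
  have h2 : (y/x) ^ p = y ^ p / x ^ p := Real.div_rpow hy.le hx.le p
  have hX : 0 < x ^ p := Real.rpow_pos_of_pos hx p
  have hY : 0 < y ^ p := Real.rpow_pos_of_pos hy p
  have hXY : x ^ p ≤ y ^ p := Real.rpow_le_rpow hx.le hxy hp0.le
  have hyp : y ^ p ≤ x ^ p + p * (y - x) * x ^ p / x := by
    rw [h1, h2] at hb
    have h3 := (div_le_iff₀ hX).mp hb
    calc y ^ p ≤ (1 + p * ((y - x)/x)) * x ^ p := h3
      _ = x ^ p + p * (y - x) * x ^ p / x := by field_simp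
  have e1 : x ^ (-p) - y ^ (-p) = (y ^ p - x ^ p) / (x ^ p * y ^ p) := by
    rw [Real.rpow_neg hx.le, Real.rpow_neg hy.le, inv_sub_inv hX.ne' hY.ne']
  have e2 : x ^ (-p - 1) = (x ^ p * x)⁻¹ := by
    rw [show -p - 1 = -(p + 1) by ring, Real.rpow_neg hx.le, Real.rpow_add hx, Real.rpow_one]
  rw [e1, e2]
  calc (y ^ p - x ^ p) / (x ^ p * y ^ p)
      ≤ (p * (y - x) * x ^ p / x) / (x ^ p * y ^ p) := by
        gcongr
        linarith
    _ = (p * (y - x)) / (x * y ^ p) := by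
        field_simp
    _ ≤ (p * (y - x)) / (x * x ^ p) := by
        rw [div_le_div_iff₀ (by positivity) (by positivity)]
        exact mul_le_mul_of_nonneg_left (by nlinarith)
          (mul_nonneg hp0.le (by linarith))
    _ = p * (y - x) * (x ^ p * x)⁻¹ := by
        rw [div_eq_mul_inv, mul_comm (x ^ p) x]

lemma aux_II_sub {p : ℝ} (hp : -1 < p) (c d e : ℝ) :
    IntervalIntegrable (fun r : ℝ => (e - r) ^ p) volume c d := by
  have h := (intervalIntegral.intervalIntegrable_rpow' (a := e - c) (b := e - d) hp).comp_sub_left e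
  simpa using h

lemma aux_int_sub {p : ℝ} (hp : -1 < p) (c d e : ℝ) :
    ∫ r in c..d, (e - r) ^ p = ((e - c) ^ (p+1) - (e - d) ^ (p+1)) / (p+1) := by
  rw [intervalIntegral.integral_comp_sub_left (fun u : ℝ => u ^ p) e,
    integral_rpow (Or.inl hp)]

lemma aux_int_rpow_Ioc {p c : ℝ} (hp : -1 < p) (hp1 : p + 1 ≠ 0) (hc : 0 ≤ c) :
    ∫ r in Ioc (0:ℝ) c, r ^ p = c ^ (p+1) / (p+1) := by
  rw [← intervalIntegral.integral_of_le hc, integral_rpow (Or.inl hp),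
    Real.zero_rpow hp1, sub_zero]

lemma aux_IO_rpow_Ioc {p c : ℝ} (hp : -1 < p) (hc : 0 ≤ c) :
    IntegrableOn (fun r : ℝ => r ^ p) (Ioc 0 c) := by
  have h := intervalIntegral.intervalIntegrable_rpow' (a := (0:ℝ)) (b := c) hp
  rwa [intervalIntegrable_iff_integrableOn_Ioc_of_le hc] at h

lemma aux_IO_sub_Ioc {p : ℝ} (hp : -1 < p) {c d : ℝ} (e : ℝ) (hcd : c ≤ d) :
    IntegrableOn (fun r : ℝ => (e - r) ^ p) (Ioc c d) := by
  have h := aux_II_sub hp c d (e := e)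
  rwa [intervalIntegrable_iff_integrableOn_Ioc_of_le hcd] at h

set_option maxHeartbeats 2000000 in
lemma key_estimate (ε : ℝ) (hε : 0 < ε) (hε' : ε < 1/2)
    (Y : Type) [NormedAddCommGroup Y] [NormedSpace ℝ Y] [CompleteSpace Y]
    (B : ℝ) (hB : 0 ≤ B) (g : ℝ → Y) (hg : StronglyMeasurable g)
    (hbd : ∀ r : ℝ, 0 < r → ‖g r‖ ≤ B * r ^ (-(1:ℝ)/2 - ε))
    (a b : ℝ) (ha : 0 < a) (hab : a ≤ b) (hb2 : b ≤ 2 * a) :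
    ‖(∫ r in Ioo 0 b, (b - r) ^ (ε - 1) • g r) - ∫ r in Ioo 0 a, (a - r) ^ (ε - 1) • g r‖
      ≤ (3/(1/2 - ε) + 3/ε) * B * ((b - a)/a) ^ ε * a ^ (-(1:ℝ)/2) := by
  have hq : (-1:ℝ) < ε - 1 := by linarith
  have hp : (-1:ℝ) < -(1:ℝ)/2 - ε := by linarith
  have hb0 : 0 < b := lt_of_lt_of_le ha hab
  have ha2 : 0 < a / 2 := by linarith
  rcases eq_or_lt_of_le hab with rfl | hlt
  · simp [Real.zero_rpow hε.ne']
  have hδ : 0 < b - a := by linarith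
  have hδa : b - a ≤ a := by linarith
  -- measurability
  have hmes : ∀ (c : ℝ) (S : Set ℝ), MeasurableSet S → S ⊆ Iio c →
      AEStronglyMeasurable (fun r => (c - r) ^ (ε - 1) • g r) (volume.restrict S) := by
    intro c S hS hsub
    apply AEStronglyMeasurable.smul ?_ hg.aestronglyMeasurable
    apply ContinuousOn.aestronglyMeasurable ?_ hS
    intro r hr
    have hrc : r < c := hsub hr
    have h1 : ContinuousAt (fun x : ℝ => x ^ (ε - 1)) (c - r) :=
      Real.continuousAt_rpow_const _ _ (Or.inl (sub_pos.mpr hrc).ne')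
    exact ((h1.comp ((continuous_const.sub continuous_id).continuousAt)).continuousWithinAt)
  -- integrability of the full integrand
  have hInt : ∀ c : ℝ, 0 < c → IntegrableOn (fun r => (c - r) ^ (ε - 1) • g r) (Ioo 0 c) := by
    intro c hc
    have hc2 : 0 < c / 2 := by linarith
    rw [← Set.Ioc_union_Ioo_eq_Ioo (le_of_lt hc2) (by linarith : c/2 < c)]
    apply IntegrableOn.union
    · apply Integrable.mono' ((aux_IO_rpow_Ioc hp hc2.le).const_mul ((c/2) ^ (ε - 1) * B))
        (hmes c _ measurableSet_Ioc (fun r hr => lt_of_le_of_lt hr.2 (by linarith)))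
      filter_upwards [ae_restrict_mem measurableSet_Ioc] with r hr
      have hr0 : 0 < r := hr.1
      have hcr : 0 < c - r := by have := hr.2; linarith
      rw [norm_smul, Real.norm_eq_abs, abs_of_nonneg (Real.rpow_nonneg hcr.le _)]
      calc (c - r) ^ (ε - 1) * ‖g r‖
          ≤ (c/2) ^ (ε - 1) * (B * r ^ (-(1:ℝ)/2 - ε)) :=
            mul_le_mul (Real.rpow_le_rpow_of_nonpos hc2 (by linarith [hr.2]) (by linarith))
              (hbd r hr0) (norm_nonneg _) (Real.rpow_nonneg hc2.le _)
        _ = (c/2) ^ (ε - 1) * B * r ^ (-(1:ℝ)/2 - ε) := by ring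
    · have hii : IntegrableOn (fun r : ℝ => (c - r) ^ (ε - 1)) (Ioo (c/2) c) :=
        (aux_IO_sub_Ioc hq c (by linarith)).mono_set Ioo_subset_Ioc_self
      apply Integrable.mono' (hii.const_mul (B * (c/2) ^ (-(1:ℝ)/2 - ε)))
        (hmes c _ measurableSet_Ioo (fun r hr => hr.2))
      filter_upwards [ae_restrict_mem measurableSet_Ioo] with r hr
      have hr0 : 0 < r := lt_trans hc2 hr.1
      have hcr : 0 < c - r := by have := hr.2; linarith
      rw [norm_smul, Real.norm_eq_abs, abs_of_nonneg (Real.rpow_nonneg hcr.le _)]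
      calc (c - r) ^ (ε - 1) * ‖g r‖
          ≤ (c - r) ^ (ε - 1) * (B * (c/2) ^ (-(1:ℝ)/2 - ε)) := by
            apply mul_le_mul_of_nonneg_left ?_ (Real.rpow_nonneg hcr.le _)
            calc ‖g r‖ ≤ B * r ^ (-(1:ℝ)/2 - ε) := hbd r hr0
              _ ≤ B * (c/2) ^ (-(1:ℝ)/2 - ε) :=
                  mul_le_mul_of_nonneg_left
                    (Real.rpow_le_rpow_of_nonpos hc2 hr.1.le (by linarith)) hB
        _ = B * (c/2) ^ (-(1:ℝ)/2 - ε) * (c - r) ^ (ε - 1) := by ring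
  have hIb := hInt b hb0
  have hIa := hInt a ha
  have hIb1 : IntegrableOn (fun r => (b - r) ^ (ε - 1) • g r) (Ioo 0 a) :=
    hIb.mono_set (Ioo_subset_Ioo_right hab)
  have hIb3 : IntegrableOn (fun r => (b - r) ^ (ε - 1) • g r) (Ico a b) :=
    hIb.mono_set (fun r hr => ⟨lt_of_lt_of_le ha hr.1, hr.2⟩)
  have hdisj : Disjoint (Ioo (0:ℝ) a) (Ico a b) := by
    apply Set.disjoint_left.mpr
    intro r h1 h2
    exact absurd h2.1 (not_le.mpr h1.2)
  have hsplit1 : (∫ r in Ioo 0 b, (b - r) ^ (ε - 1) • g r)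
      = (∫ r in Ioo 0 a, (b - r) ^ (ε - 1) • g r)
        + ∫ r in Ico a b, (b - r) ^ (ε - 1) • g r := by
    rw [← setIntegral_union hdisj measurableSet_Ico hIb1 hIb3, Ioo_union_Ico_eq_Ioo ha hab]
  have hId : IntegrableOn
      (fun r => (b - r) ^ (ε - 1) • g r - (a - r) ^ (ε - 1) • g r) (Ioo 0 a) := hIb1.sub hIa
  have hId1 := hId.mono_set (Ioc_subset_Ioo_right (by linarith : a/2 < a))
  have hId2 := hId.mono_set (Ioo_subset_Ioo_left ha2.le)
  have hdisj2 : Disjoint (Ioc (0:ℝ) (a/2)) (Ioo (a/2) a) := by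
    apply Set.disjoint_left.mpr
    intro r h1 h2
    exact absurd h2.1 (not_lt.mpr h1.2)
  have hsplit2 : (∫ r in Ioo 0 a, ((b - r) ^ (ε - 1) • g r - (a - r) ^ (ε - 1) • g r))
      = (∫ r in Ioc 0 (a/2), ((b - r) ^ (ε - 1) • g r - (a - r) ^ (ε - 1) • g r))
        + ∫ r in Ioo (a/2) a, ((b - r) ^ (ε - 1) • g r - (a - r) ^ (ε - 1) • g r) := by
    rw [← setIntegral_union hdisj2 measurableSet_Ioo hId1 hId2,
      Ioc_union_Ioo_eq_Ioo ha2.le (by linarith : a/2 < a)]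
  have hdecomp : (∫ r in Ioo 0 b, (b - r) ^ (ε - 1) • g r)
        - (∫ r in Ioo 0 a, (a - r) ^ (ε - 1) • g r)
      = ((∫ r in Ioc 0 (a/2), ((b - r) ^ (ε - 1) • g r - (a - r) ^ (ε - 1) • g r))
          + ∫ r in Ioo (a/2) a, ((b - r) ^ (ε - 1) • g r - (a - r) ^ (ε - 1) • g r))
        + ∫ r in Ico a b, (b - r) ^ (ε - 1) • g r := by
    rw [hsplit1, add_sub_right_comm, ← integral_sub hIb1 hIa, hsplit2]
  -- shared facts
  have hXnn : (0:ℝ) ≤ ((b - a)/a) ^ ε * a ^ (-(1:ℝ)/2) :=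
    mul_nonneg (Real.rpow_nonneg (div_nonneg hδ.le ha.le) _) (Real.rpow_nonneg ha.le _)
  have edist : a ^ (-(1:ℝ)/2 - ε) * (b - a) ^ ε = ((b - a)/a) ^ ε * a ^ (-(1:ℝ)/2) := by
    rw [Real.div_rpow hδ.le ha.le, show -(1:ℝ)/2 - ε = -ε + -(1:ℝ)/2 by ring,
      Real.rpow_add ha, Real.rpow_neg ha.le ε, div_eq_mul_inv]
    ring
  have hhalf : (0:ℝ) < 1/2 - ε := by linarith
  -- N1
  have hN1 : ‖∫ r in Ioc 0 (a/2), ((b - r) ^ (ε - 1) • g r - (a - r) ^ (ε - 1) • g r)‖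
      ≤ 3/(1/2 - ε) * (B * (((b - a)/a) ^ ε * a ^ (-(1:ℝ)/2))) := by
    have hbound : ‖∫ r in Ioc 0 (a/2), ((b - r) ^ (ε - 1) • g r - (a - r) ^ (ε - 1) • g r)‖
        ≤ ∫ r in Ioc 0 (a/2), ((1 - ε) * (b - a) * (a/2) ^ (ε - 2) * B) * r ^ (-(1:ℝ)/2 - ε) := by
      apply norm_integral_le_of_norm_le ((aux_IO_rpow_Ioc hp ha2.le).const_mul _)
      filter_upwards [ae_restrict_mem measurableSet_Ioc] with r hr
      have hr0 : 0 < r := hr.1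
      have har : a/2 ≤ a - r := by linarith [hr.2]
      have h0ar : 0 < a - r := lt_of_lt_of_le ha2 har
      have hle : (b - r) ^ (ε - 1) ≤ (a - r) ^ (ε - 1) :=
        Real.rpow_le_rpow_of_nonpos h0ar (by linarith) (by linarith)
      rw [← sub_smul, norm_smul, Real.norm_eq_abs, abs_of_nonpos (by linarith), neg_sub]
      have hmvt : (a - r) ^ (ε - 1) - (b - r) ^ (ε - 1)
          ≤ (1 - ε) * (b - a) * (a - r) ^ (ε - 2) := by
        have h := aux_rpow_sub (p := 1 - ε) (by linarith) (by linarith) h0ar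
          (by linarith : a - r ≤ b - r)
        rw [show -(1 - ε) = ε - 1 by ring] at h
        rw [show ε - 1 - 1 = ε - 2 by ring] at h
        calc (a - r) ^ (ε - 1) - (b - r) ^ (ε - 1)
            ≤ (1 - ε) * ((b - r) - (a - r)) * (a - r) ^ (ε - 2) := h
          _ = (1 - ε) * (b - a) * (a - r) ^ (ε - 2) := by ring
      calc ((a - r) ^ (ε - 1) - (b - r) ^ (ε - 1)) * ‖g r‖
          ≤ ((1 - ε) * (b - a) * (a/2) ^ (ε - 2)) * (B * r ^ (-(1:ℝ)/2 - ε)) := by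
            apply mul_le_mul ?_ (hbd r hr0) (norm_nonneg _)
              (mul_nonneg (mul_nonneg (by linarith) hδ.le) (Real.rpow_nonneg ha2.le _))
            calc (a - r) ^ (ε - 1) - (b - r) ^ (ε - 1)
                ≤ (1 - ε) * (b - a) * (a - r) ^ (ε - 2) := hmvt
              _ ≤ (1 - ε) * (b - a) * (a/2) ^ (ε - 2) :=
                  mul_le_mul_of_nonneg_left
                    (Real.rpow_le_rpow_of_nonpos ha2 har (by linarith))
                    (mul_nonneg (by linarith) hδ.le)
        _ = ((1 - ε) * (b - a) * (a/2) ^ (ε - 2) * B) * r ^ (-(1:ℝ)/2 - ε) := by ring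
    rw [integral_const_mul _ _,
      aux_int_rpow_Ioc hp (ne_of_gt (by linarith : (0:ℝ) < -(1:ℝ)/2 - ε + 1)) ha2.le] at hbound
    refine hbound.trans ?_
    rw [show -(1:ℝ)/2 - ε + 1 = 1/2 - ε by ring]
    have e3 : (a/2) ^ (ε - 2) * (a/2) ^ ((1:ℝ)/2 - ε) = (a/2) ^ (-(3:ℝ)/2) := by
      rw [← Real.rpow_add ha2]
      congr 1
      ring
    have hinv23 : ((2:ℝ) ^ (-(3:ℝ)/2))⁻¹ = (2:ℝ) ^ ((3:ℝ)/2) := by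
      rw [show (-(3:ℝ)/2) = -((3:ℝ)/2) by ring, Real.rpow_neg (by norm_num : (0:ℝ) ≤ 2), inv_inv]
    have e4 : (a/2) ^ (-(3:ℝ)/2) = (2:ℝ) ^ ((3:ℝ)/2) * a ^ (-(3:ℝ)/2) := by
      rw [Real.div_rpow ha.le (by norm_num : (0:ℝ) ≤ 2) (-(3:ℝ)/2), div_eq_mul_inv, hinv23]
      ring
    have h23 : (2:ℝ) ^ ((3:ℝ)/2) ≤ 3 := by
      have h1 : ((2:ℝ) ^ ((3:ℝ)/2)) ^ (2:ℕ) = 8 := by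
        rw [← Real.rpow_natCast ((2:ℝ) ^ ((3:ℝ)/2)) 2,
          ← Real.rpow_mul (by norm_num : (0:ℝ) ≤ 2),
          show (3:ℝ)/2 * (2:ℕ) = ((3:ℕ):ℝ) by push_cast; ring, Real.rpow_natCast]
        norm_num
      nlinarith [Real.rpow_nonneg (by norm_num : (0:ℝ) ≤ 2) ((3:ℝ)/2)]
    have e5 : a ^ (-(3:ℝ)/2) = a⁻¹ * a ^ (-(1:ℝ)/2) := by
      rw [show (-(3:ℝ)/2) = (-1 : ℝ) + -(1:ℝ)/2 by norm_num, Real.rpow_add ha, Real.rpow_neg_one]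
    have e6 : (b - a) * a⁻¹ ≤ ((b - a)/a) ^ ε := by
      rw [← div_eq_mul_inv]
      calc (b - a)/a = ((b - a)/a) ^ (1:ℝ) := (Real.rpow_one _).symm
        _ ≤ ((b - a)/a) ^ ε := Real.rpow_le_rpow_of_exponent_ge (by positivity)
            ((div_le_one ha).mpr hδa) (by linarith)
    calc ((1 - ε) * (b - a) * (a/2) ^ (ε - 2) * B) * ((a/2) ^ ((1:ℝ)/2 - ε) / (1/2 - ε))
        = ((1 - ε)/(1/2 - ε) * B) * ((b - a) * ((a/2) ^ (ε - 2) * (a/2) ^ ((1:ℝ)/2 - ε))) := by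
          ring
      _ = ((1 - ε)/(1/2 - ε) * B) * ((b - a) * ((2:ℝ) ^ ((3:ℝ)/2) * (a⁻¹ * a ^ (-(1:ℝ)/2)))) := by
          rw [e3, e4, e5]
      _ ≤ ((1 - ε)/(1/2 - ε) * B) * (3 * (((b - a)/a) ^ ε * a ^ (-(1:ℝ)/2))) := by
          apply mul_le_mul_of_nonneg_left ?_
            (mul_nonneg (div_nonneg (by linarith) hhalf.le) hB)
          have h1 : (b - a) * a⁻¹ * a ^ (-(1:ℝ)/2) ≤ ((b - a)/a) ^ ε * a ^ (-(1:ℝ)/2) :=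
            mul_le_mul_of_nonneg_right e6 (Real.rpow_nonneg ha.le _)
          have h2 : (0:ℝ) ≤ (b - a) * a⁻¹ * a ^ (-(1:ℝ)/2) := by positivity
          nlinarith [h23, h1, h2]
      _ ≤ 3/(1/2 - ε) * (B * (((b - a)/a) ^ ε * a ^ (-(1:ℝ)/2))) := by
          have h3 : (1 - ε)/(1/2 - ε) * B * 3 ≤ 3/(1/2 - ε) * B := by
            rw [div_mul_eq_mul_div, div_mul_eq_mul_div, div_mul_eq_mul_div, div_le_div_iff₀ hhalf hhalf]
            nlinarith [mul_nonneg (mul_nonneg hB hhalf.le) hε.le]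
          calc ((1 - ε)/(1/2 - ε) * B) * (3 * (((b - a)/a) ^ ε * a ^ (-(1:ℝ)/2)))
              = ((1 - ε)/(1/2 - ε) * B * 3) * (((b - a)/a) ^ ε * a ^ (-(1:ℝ)/2)) := by ring
            _ ≤ (3/(1/2 - ε) * B) * (((b - a)/a) ^ ε * a ^ (-(1:ℝ)/2)) :=
                mul_le_mul_of_nonneg_right h3 hXnn
            _ = 3/(1/2 - ε) * (B * (((b - a)/a) ^ ε * a ^ (-(1:ℝ)/2))) := by ring
  -- N2
  have hN2 : ‖∫ r in Ioo (a/2) a, ((b - r) ^ (ε - 1) • g r - (a - r) ^ (ε - 1) • g r)‖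
      ≤ 2/ε * (B * (((b - a)/a) ^ ε * a ^ (-(1:ℝ)/2))) := by
    have hIOa : IntegrableOn (fun r : ℝ => (a - r) ^ (ε - 1)) (Ioo (a/2) a) :=
      (aux_IO_sub_Ioc hq a (by linarith : a/2 ≤ a)).mono_set Ioo_subset_Ioc_self
    have hIOb : IntegrableOn (fun r : ℝ => (b - r) ^ (ε - 1)) (Ioo (a/2) a) :=
      (aux_IO_sub_Ioc hq b (by linarith : a/2 ≤ a)).mono_set Ioo_subset_Ioc_self
    have hbound : ‖∫ r in Ioo (a/2) a, ((b - r) ^ (ε - 1) • g r - (a - r) ^ (ε - 1) • g r)‖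
        ≤ ∫ r in Ioo (a/2) a,
            (B * (a/2) ^ (-(1:ℝ)/2 - ε)) * ((a - r) ^ (ε - 1) - (b - r) ^ (ε - 1)) := by
      apply norm_integral_le_of_norm_le ((hIOa.sub hIOb).const_mul _)
      filter_upwards [ae_restrict_mem measurableSet_Ioo] with r hr
      have hr0 : 0 < r := lt_trans ha2 hr.1
      have h0ar : 0 < a - r := by have := hr.2; linarith
      have hle : (b - r) ^ (ε - 1) ≤ (a - r) ^ (ε - 1) :=
        Real.rpow_le_rpow_of_nonpos h0ar (by linarith) (by linarith)
      rw [← sub_smul, norm_smul, Real.norm_eq_abs, abs_of_nonpos (by linarith), neg_sub]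
      calc ((a - r) ^ (ε - 1) - (b - r) ^ (ε - 1)) * ‖g r‖
          ≤ ((a - r) ^ (ε - 1) - (b - r) ^ (ε - 1)) * (B * (a/2) ^ (-(1:ℝ)/2 - ε)) := by
            apply mul_le_mul_of_nonneg_left ?_ (by linarith)
            calc ‖g r‖ ≤ B * r ^ (-(1:ℝ)/2 - ε) := hbd r hr0
              _ ≤ B * (a/2) ^ (-(1:ℝ)/2 - ε) :=
                  mul_le_mul_of_nonneg_left
                    (Real.rpow_le_rpow_of_nonpos ha2 hr.1.le (by linarith)) hB
        _ = (B * (a/2) ^ (-(1:ℝ)/2 - ε)) * ((a - r) ^ (ε - 1) - (b - r) ^ (ε - 1)) := by ring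
    have hval : (∫ r in Ioo (a/2) a, ((a - r) ^ (ε - 1) - (b - r) ^ (ε - 1)))
        = ((a/2) ^ ε - ((b - a/2) ^ ε - (b - a) ^ ε)) / ε := by
      rw [← integral_Ioc_eq_integral_Ioo,
        ← intervalIntegral.integral_of_le (by linarith : a/2 ≤ a),
        intervalIntegral.integral_sub (aux_II_sub hq _ _ _) (aux_II_sub hq _ _ _),
        aux_int_sub hq, aux_int_sub hq, show ε - 1 + 1 = ε by ring,
        show a - a/2 = a/2 by ring, sub_self, Real.zero_rpow hε.ne', sub_zero]
      ring
    rw [integral_const_mul _ _, hval] at hbound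
    refine hbound.trans ?_
    have hnum : ((a/2) ^ ε - ((b - a/2) ^ ε - (b - a) ^ ε)) ≤ (b - a) ^ ε := by
      have := Real.rpow_le_rpow ha2.le (by linarith : a/2 ≤ b - a/2) hε.le
      linarith
    have h2e : (a/2) ^ (-(1:ℝ)/2 - ε) ≤ 2 * a ^ (-(1:ℝ)/2 - ε) := by
      rw [Real.div_rpow ha.le (by norm_num : (0:ℝ) ≤ 2) (-(1:ℝ)/2 - ε), div_eq_mul_inv]
      have hi : ((2:ℝ) ^ (-(1:ℝ)/2 - ε))⁻¹ ≤ 2 := by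
        rw [show (-(1:ℝ)/2 - ε) = -((1:ℝ)/2 + ε) by ring,
          Real.rpow_neg (by norm_num : (0:ℝ) ≤ 2), inv_inv]
        calc (2:ℝ) ^ ((1:ℝ)/2 + ε) ≤ (2:ℝ) ^ (1:ℝ) :=
            Real.rpow_le_rpow_of_exponent_le (by norm_num) (by linarith)
          _ = 2 := Real.rpow_one 2
      calc a ^ (-(1:ℝ)/2 - ε) * ((2:ℝ) ^ (-(1:ℝ)/2 - ε))⁻¹
          ≤ a ^ (-(1:ℝ)/2 - ε) * 2 := mul_le_mul_of_nonneg_left hi (Real.rpow_nonneg ha.le _)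
        _ = 2 * a ^ (-(1:ℝ)/2 - ε) := mul_comm _ _
    calc (B * (a/2) ^ (-(1:ℝ)/2 - ε)) * (((a/2) ^ ε - ((b - a/2) ^ ε - (b - a) ^ ε)) / ε)
        ≤ (B * (a/2) ^ (-(1:ℝ)/2 - ε)) * ((b - a) ^ ε / ε) := by
          apply mul_le_mul_of_nonneg_left ?_
            (mul_nonneg hB (Real.rpow_nonneg ha2.le _))
          have h9 := mul_le_mul_of_nonneg_right hnum (inv_nonneg.mpr hε.le)
          rw [div_eq_mul_inv, div_eq_mul_inv]
          exact h9
      _ ≤ (B * (2 * a ^ (-(1:ℝ)/2 - ε))) * ((b - a) ^ ε / ε) :=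
          mul_le_mul_of_nonneg_right (mul_le_mul_of_nonneg_left h2e hB)
            (div_nonneg (Real.rpow_nonneg hδ.le _) hε.le)
      _ = 2/ε * (B * (a ^ (-(1:ℝ)/2 - ε) * (b - a) ^ ε)) := by ring
      _ = 2/ε * (B * (((b - a)/a) ^ ε * a ^ (-(1:ℝ)/2))) := by rw [edist]
  -- N3
  have hN3 : ‖∫ r in Ico a b, (b - r) ^ (ε - 1) • g r‖
      ≤ 1/ε * (B * (((b - a)/a) ^ ε * a ^ (-(1:ℝ)/2))) := by
    have hIOb : IntegrableOn (fun r : ℝ => (b - r) ^ (ε - 1)) (Ico a b) :=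
      (integrableOn_Ico_iff_integrableOn_Ioo enorm_ne_top).mpr
        ((aux_IO_sub_Ioc hq b hab).mono_set Ioo_subset_Ioc_self)
    have hbound : ‖∫ r in Ico a b, (b - r) ^ (ε - 1) • g r‖
        ≤ ∫ r in Ico a b, (B * a ^ (-(1:ℝ)/2 - ε)) * (b - r) ^ (ε - 1) := by
      apply norm_integral_le_of_norm_le (hIOb.const_mul _)
      filter_upwards [ae_restrict_mem measurableSet_Ico] with r hr
      have hr0 : 0 < r := lt_of_lt_of_le ha hr.1
      have hbr : 0 < b - r := by have := hr.2; linarith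
      rw [norm_smul, Real.norm_eq_abs, abs_of_nonneg (Real.rpow_nonneg hbr.le _)]
      calc (b - r) ^ (ε - 1) * ‖g r‖
          ≤ (b - r) ^ (ε - 1) * (B * a ^ (-(1:ℝ)/2 - ε)) := by
            apply mul_le_mul_of_nonneg_left ?_ (Real.rpow_nonneg hbr.le _)
            calc ‖g r‖ ≤ B * r ^ (-(1:ℝ)/2 - ε) := hbd r hr0
              _ ≤ B * a ^ (-(1:ℝ)/2 - ε) :=
                  mul_le_mul_of_nonneg_left
                    (Real.rpow_le_rpow_of_nonpos ha hr.1 (by linarith)) hB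
        _ = (B * a ^ (-(1:ℝ)/2 - ε)) * (b - r) ^ (ε - 1) := by ring
    have hval : (∫ r in Ico a b, (b - r) ^ (ε - 1)) = (b - a) ^ ε / ε := by
      rw [integral_Ico_eq_integral_Ioo, ← integral_Ioc_eq_integral_Ioo,
        ← intervalIntegral.integral_of_le hlt.le, aux_int_sub hq,
        show ε - 1 + 1 = ε by ring, sub_self, Real.zero_rpow hε.ne', sub_zero]
    rw [integral_const_mul _ _, hval] at hbound
    refine hbound.trans (le_of_eq ?_)
    calc (B * a ^ (-(1:ℝ)/2 - ε)) * ((b - a) ^ ε / ε)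
        = 1/ε * (B * (a ^ (-(1:ℝ)/2 - ε) * (b - a) ^ ε)) := by ring
      _ = 1/ε * (B * (((b - a)/a) ^ ε * a ^ (-(1:ℝ)/2))) := by rw [edist]
  rw [hdecomp]
  refine le_trans (le_trans (norm_add_le _ _)
    (add_le_add (le_trans (norm_add_le _ _) (add_le_add hN1 hN2)) hN3))
    (le_of_eq (by ring))

lemma aux_compare (ε : ℝ) (hε : 0 < ε) (hε' : ε < 1/2) (s aa d : ℝ) (hs : 0 < s)
    (haa : s/2 ≤ aa) (hd : 0 ≤ d) :
    (d/aa) ^ ε * aa ^ (-(1:ℝ)/2) ≤ 2 * ((d/s) ^ ε * s ^ (-(1:ℝ)/2)) := by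
  have haa0 : 0 < aa := lt_of_lt_of_le (by linarith) haa
  have h1 : (d/aa) ^ ε ≤ (2 * (d/s)) ^ ε := by
    apply Real.rpow_le_rpow (div_nonneg hd haa0.le) ?_ hε.le
    calc d / aa ≤ d / (s/2) := by
          apply div_le_div_of_nonneg_left hd (by linarith) haa
      _ = 2 * (d/s) := by ring
  have h2 : (2 * (d/s)) ^ ε = 2 ^ ε * (d/s) ^ ε :=
    Real.mul_rpow (by norm_num) (div_nonneg hd hs.le)
  have h3 : aa ^ (-(1:ℝ)/2) ≤ (s/2) ^ (-(1:ℝ)/2) :=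
    Real.rpow_le_rpow_of_nonpos (by linarith) haa (by norm_num)
  have h4 : (s/2) ^ (-(1:ℝ)/2) = 2 ^ ((1:ℝ)/2) * s ^ (-(1:ℝ)/2) := by
    rw [Real.div_rpow hs.le (by norm_num : (0:ℝ) ≤ 2) _, div_eq_mul_inv,
      show (-(1:ℝ)/2) = -((1:ℝ)/2) by ring, Real.rpow_neg (by norm_num : (0:ℝ) ≤ 2), inv_inv]
    ring
  have h5 : (2:ℝ) ^ ε * 2 ^ ((1:ℝ)/2) ≤ 2 := by
    rw [← Real.rpow_add (by norm_num : (0:ℝ) < 2)]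
    calc (2:ℝ) ^ (ε + 1/2) ≤ 2 ^ (1:ℝ) :=
        Real.rpow_le_rpow_of_exponent_le (by norm_num) (by linarith)
      _ = 2 := Real.rpow_one 2
  calc (d/aa) ^ ε * aa ^ (-(1:ℝ)/2)
      ≤ (2 ^ ε * (d/s) ^ ε) * (2 ^ ((1:ℝ)/2) * s ^ (-(1:ℝ)/2)) := by
        apply mul_le_mul (by rw [← h2]; exact h1) (h3.trans (le_of_eq h4))
          (Real.rpow_nonneg haa0.le _)
          (mul_nonneg (Real.rpow_nonneg (by norm_num) _)
            (Real.rpow_nonneg (div_nonneg hd hs.le) _))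
    _ = (2 ^ ε * 2 ^ ((1:ℝ)/2)) * ((d/s) ^ ε * s ^ (-(1:ℝ)/2)) := by ring
    _ ≤ 2 * ((d/s) ^ ε * s ^ (-(1:ℝ)/2)) :=
        mul_le_mul_of_nonneg_right h5
          (mul_nonneg (Real.rpow_nonneg (div_nonneg hd hs.le) _) (Real.rpow_nonneg hs.le _))


/-- fractional integration of an operator family `Φ` with
`‖Φ(s)‖ ≤ A₀ s^{-1/2-ε}` yields an `(ε,2)`-standard convolution kernel on `ℝ`. -/
theorem statement2 (ε : ℝ) (hε : 0 < ε) (hε' : ε < 1/2) :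
    ∃ C : ℝ, 0 < C ∧
      ∀ (X : Type) [NormedAddCommGroup X] [NormedSpace ℝ X] [CompleteSpace X]
        (Y : Type) [NormedAddCommGroup Y] [NormedSpace ℝ Y] [CompleteSpace Y]
        (A₀ : ℝ), 0 < A₀ → ∀ Φ k : ℝ → (X →L[ℝ] Y),
        (∀ x : X, StronglyMeasurable fun r => Φ r x) →
        (∀ s : ℝ, 0 < s → ‖Φ s‖ ≤ A₀ * s ^ (-(1:ℝ)/2 - ε)) →
        (∀ (x : X) (s : ℝ), 0 < s →
          k s x = (Real.Gamma ε)⁻¹ • ∫ r in Ioo (0:ℝ) s, ((s - r) ^ (ε - 1)) • Φ r x) →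
        (∀ s : ℝ, s ≤ 0 → k s = 0) →
        ∀ s t : ℝ, s ≠ 0 → |t| ≤ |s| / 2 →
          ‖k (s - t) - k s‖ ≤ C * A₀ * (|t| / |s|) ^ ε * |s| ^ (-(1:ℝ)/2) := by
  have hΓ : 0 < Real.Gamma ε := Real.Gamma_pos_of_pos hε
  have hΓi : 0 < (Real.Gamma ε)⁻¹ := inv_pos.mpr hΓ
  have hhalf : (0:ℝ) < 1/2 - ε := by linarith
  have hC0 : (0:ℝ) < 3/(1/2 - ε) + 3/ε := by
    have u1 := div_pos (by norm_num : (0:ℝ) < 3) hhalf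
    have u2 := div_pos (by norm_num : (0:ℝ) < 3) hε
    linarith
  refine ⟨2 * (3/(1/2 - ε) + 3/ε) * (Real.Gamma ε)⁻¹,
    mul_pos (mul_pos two_pos hC0) hΓi, ?_⟩
  intro X _ _ _ Y _ _ _ A₀ hA₀ Φ k hΦm hΦbd hk hk0 s t hs ht
  have hRHSnn : (0:ℝ) ≤ 2 * (3/(1/2 - ε) + 3/ε) * (Real.Gamma ε)⁻¹ * A₀ *
      (|t| / |s|) ^ ε * |s| ^ (-(1:ℝ)/2) :=
    mul_nonneg (mul_nonneg (mul_nonneg (mul_pos (mul_pos two_pos hC0) hΓi).le hA₀.le)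
      (Real.rpow_nonneg (div_nonneg (abs_nonneg t) (abs_nonneg s)) _))
      (Real.rpow_nonneg (abs_nonneg s) _)
  rcases lt_or_gt_of_ne hs with hneg | hpos
  · -- s < 0 : both sides of the kernel vanish
    have habs : |s| = -s := abs_of_neg hneg
    have h2 := (abs_le.mp ht).1
    rw [habs] at h2
    have h1 : s - t ≤ 0 := by linarith
    rw [hk0 _ h1, hk0 _ hneg.le, sub_zero, norm_zero]
    exact hRHSnn
  · -- 0 < s
    have habs : |s| = s := abs_of_pos hpos
    rw [habs]
    have hts : |t| ≤ s / 2 := by rwa [habs] at ht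
    have hts2 := abs_le.mp hts
    have hu0 : 0 < s - t := by linarith [hts2.2]
    apply ContinuousLinearMap.opNorm_le_bound _ (by rw [habs] at hRHSnn; exact hRHSnn)
    intro x
    have hgm : StronglyMeasurable fun r => Φ r x := hΦm x
    have hB0 : (0:ℝ) ≤ A₀ * ‖x‖ := mul_nonneg hA₀.le (norm_nonneg x)
    have hgb : ∀ r : ℝ, 0 < r → ‖Φ r x‖ ≤ (A₀ * ‖x‖) * r ^ (-(1:ℝ)/2 - ε) := by
      intro r hr
      calc ‖Φ r x‖ ≤ ‖Φ r‖ * ‖x‖ := (Φ r).le_opNorm x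
        _ ≤ (A₀ * r ^ (-(1:ℝ)/2 - ε)) * ‖x‖ :=
            mul_le_mul_of_nonneg_right (hΦbd r hr) (norm_nonneg x)
        _ = (A₀ * ‖x‖) * r ^ (-(1:ℝ)/2 - ε) := by ring
    have hJ : ‖(∫ r in Ioo (0:ℝ) (s - t), ((s - t - r) ^ (ε - 1)) • Φ r x)
          - ∫ r in Ioo (0:ℝ) s, ((s - r) ^ (ε - 1)) • Φ r x‖
        ≤ (3/(1/2 - ε) + 3/ε) * (A₀ * ‖x‖) *
            (2 * ((|t| / s) ^ ε * s ^ (-(1:ℝ)/2))) := by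
      rcases le_total (s - t) s with hcase | hcase
      · have ht0 : 0 ≤ t := by linarith
        have hbd2 := key_estimate ε hε hε' Y (A₀ * ‖x‖) hB0 _ hgm hgb (s - t) s hu0 hcase
          (by linarith [hts2.2] : s ≤ 2 * (s - t))
        rw [norm_sub_rev]
        refine hbd2.trans ?_
        rw [show s - (s - t) = t by ring, abs_of_nonneg ht0]
        calc (3/(1/2 - ε) + 3/ε) * (A₀ * ‖x‖) * (t/(s - t)) ^ ε * (s - t) ^ (-(1:ℝ)/2)
            = ((3/(1/2 - ε) + 3/ε) * (A₀ * ‖x‖)) *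
                ((t/(s - t)) ^ ε * (s - t) ^ (-(1:ℝ)/2)) := by ring
          _ ≤ ((3/(1/2 - ε) + 3/ε) * (A₀ * ‖x‖)) *
                (2 * ((t / s) ^ ε * s ^ (-(1:ℝ)/2))) :=
              mul_le_mul_of_nonneg_left
                (aux_compare ε hε hε' s (s - t) t hpos (by linarith [hts2.2]) ht0)
                (mul_nonneg hC0.le hB0)
          _ = (3/(1/2 - ε) + 3/ε) * (A₀ * ‖x‖) * (2 * ((t / s) ^ ε * s ^ (-(1:ℝ)/2))) := by
              ring
      · have ht0 : t ≤ 0 := by linarith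
        have hbd2 := key_estimate ε hε hε' Y (A₀ * ‖x‖) hB0 _ hgm hgb s (s - t) hpos hcase
          (by linarith [hts2.1] : s - t ≤ 2 * s)
        refine hbd2.trans ?_
        rw [show s - t - s = -t by ring, abs_of_nonpos ht0]
        calc (3/(1/2 - ε) + 3/ε) * (A₀ * ‖x‖) * (-t/s) ^ ε * s ^ (-(1:ℝ)/2)
            = ((3/(1/2 - ε) + 3/ε) * (A₀ * ‖x‖)) * ((-t/s) ^ ε * s ^ (-(1:ℝ)/2)) := by ring
          _ ≤ ((3/(1/2 - ε) + 3/ε) * (A₀ * ‖x‖)) *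
                (2 * ((-t / s) ^ ε * s ^ (-(1:ℝ)/2))) :=
              mul_le_mul_of_nonneg_left
                (aux_compare ε hε hε' s s (-t) hpos (by linarith) (by linarith))
                (mul_nonneg hC0.le hB0)
          _ = (3/(1/2 - ε) + 3/ε) * (A₀ * ‖x‖) * (2 * ((-t / s) ^ ε * s ^ (-(1:ℝ)/2))) := by
              ring
    have hkx : (k (s - t) - k s) x = (Real.Gamma ε)⁻¹ •
        ((∫ r in Ioo (0:ℝ) (s - t), ((s - t - r) ^ (ε - 1)) • Φ r x)
          - ∫ r in Ioo (0:ℝ) s, ((s - r) ^ (ε - 1)) • Φ r x) := by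
      rw [ContinuousLinearMap.sub_apply, hk x (s - t) hu0, hk x s hpos, ← smul_sub]
    rw [hkx, norm_smul, Real.norm_eq_abs, abs_of_pos hΓi]
    calc (Real.Gamma ε)⁻¹ * ‖(∫ r in Ioo (0:ℝ) (s - t), ((s - t - r) ^ (ε - 1)) • Φ r x)
          - ∫ r in Ioo (0:ℝ) s, ((s - r) ^ (ε - 1)) • Φ r x‖
        ≤ (Real.Gamma ε)⁻¹ * ((3/(1/2 - ε) + 3/ε) * (A₀ * ‖x‖) *
            (2 * ((|t| / s) ^ ε * s ^ (-(1:ℝ)/2)))) :=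
          mul_le_mul_of_nonneg_left hJ hΓi.le
      _ = (2 * (3/(1/2 - ε) + 3/ε) * (Real.Gamma ε)⁻¹ * A₀ * (|t| / s) ^ ε
            * s ^ (-(1:ℝ)/2)) * ‖x‖ := by ring
end
end

section
/- Let X be a Banach space, let Y be a Hilbert space, let d ≥ 1 and p ∈ [2,∞), and let k : ℝ^d → 𝓛(X,Y) be strongly measurable; set K(s,t) := k(s−t). Suppose there exists A > 0 such that the weak L^p bound λ·|{ s ∈ ℝ^d : (∫_{ℝ^d} ‖k(s−t)f(t)‖_Y² dt)^{1/2} > λ }|^{1/p} ≤ A·‖f‖_{L^p(ℝ^d;X)} holds for every f ∈ L^p(ℝ^d;X) and every λ > 0. Then there exists a constant C depending only on d such that (∫_{ℝ^d} ‖k(t)x‖_Y² dt)^{1/2} ≤ C·A·‖x‖_X for every x ∈ X. -/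
open MeasureTheory ENNReal Metric Set

noncomputable section

/-- necessary condition for weak `L^p`-boundedness of a convolution-type
square function operator with Hilbert target: `(∫ ‖k(t)x‖²dt)^{1/2} ≤ C(d)·A·‖x‖`. -/
theorem statement3 (d : ℕ) (hd : 1 ≤ d) :
    ∃ C : ℝ, 0 < C ∧
      ∀ (X : Type) [NormedAddCommGroup X] [NormedSpace ℝ X] [CompleteSpace X]
        (Y : Type) [NormedAddCommGroup Y] [InnerProductSpace ℝ Y] [CompleteSpace Y]
        (p A : ℝ), 2 ≤ p → 0 < A →
        ∀ k : Ed d → (X →L[ℝ] Y),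
        (∀ x : X, StronglyMeasurable fun t => k t x) →
        weakBdd (fun s t : Ed d => k (s - t)) p A →
        ∀ x : X, (∫⁻ t, (‖k t x‖₊ : ℝ≥0∞) ^ (2:ℝ)) ^ ((1:ℝ)/2)
          ≤ ENNReal.ofReal (C * A * ‖x‖) := by
  have hnt : Nontrivial (Ed d) := by
    refine nontrivial_of_ne (EuclideanSpace.single (⟨0, hd⟩ : Fin d) (1:ℝ)) 0 ?_
    intro h
    have h1 := congrArg (fun v : Ed d => v (⟨0, hd⟩ : Fin d)) h
    simp [EuclideanSpace.single_apply] at h1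
  refine ⟨2 ^ d, by positivity, ?_⟩
  intro X _ _ _ Y _ _ _ p A hp hA k hk hw x
  have hp0 : (0:ℝ) < p := lt_of_lt_of_le two_pos hp
  rcases eq_or_ne x 0 with rfl | hx
  · have : ∀ t : Ed d, (‖k t (0:X)‖₊ : ℝ≥0∞) ^ (2:ℝ) = 0 := by
      intro t; simp [ENNReal.rpow_eq_zero_iff]
    simp only [this, lintegral_zero]
    rw [ENNReal.zero_rpow_of_pos (by norm_num : (0:ℝ) < 1/2)]
    exact zero_le
  have hxn : 0 < ‖x‖ := norm_pos_iff.mpr hx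
  set g : Ed d → ℝ≥0∞ := fun t => (‖k t x‖₊ : ℝ≥0∞) ^ (2:ℝ) with hg
  set M : ℝ := 2 ^ d * A * ‖x‖ with hMdef
  have hM0 : 0 < M := by positivity
  have key : ∀ r : ℝ, 0 < r →
      (∫⁻ t in ball (0:Ed d) r, g t) ≤ ENNReal.ofReal M ^ (2:ℝ) := by
    intro r hr
    by_contra hcon
    push_neg at hcon
    have hlt : ENNReal.ofReal M < (∫⁻ t in ball (0:Ed d) r, g t) ^ ((1:ℝ)/2) := by
      have h2 := ENNReal.rpow_lt_rpow hcon (by norm_num : (0:ℝ) < 1/2)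
      rwa [← ENNReal.rpow_mul, show (2:ℝ) * (1/2) = 1 by norm_num,
        ENNReal.rpow_one] at h2
    obtain ⟨lam, hlam0, hMlam, hlamB⟩ := ENNReal.lt_iff_exists_real_btwn.mp hlt
    have hlam : 0 < lam :=
      ENNReal.ofReal_pos.mp (lt_of_le_of_lt zero_le hMlam)
    set f : Ed d → X := (ball (0:Ed d) (2*r)).indicator (fun _ => x) with hf
    have hfm : AEStronglyMeasurable f volume :=
      (stronglyMeasurable_const.indicator measurableSet_ball).aestronglyMeasurable
    have hW := hw f hfm lam hlam
    have hsq : ∀ s : Ed d, sqFn (fun s t : Ed d => k (s - t)) f s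
        = (∫⁻ u in ball s (2*r), g u) ^ ((1:ℝ)/2) := by
      intro s
      have hpt : ∀ t : Ed d, (‖k (s - t) (f t)‖₊ : ℝ≥0∞) ^ (2:ℝ)
          = (ball s (2*r)).indicator g (s - t) := by
        intro t
        have hiff : s - t ∈ ball s (2*r) ↔ t ∈ ball (0:Ed d) (2*r) := by
          simp [mem_ball, dist_eq_norm, sub_sub_cancel_left]
        by_cases ht : t ∈ ball (0:Ed d) (2*r)
        · rw [Set.indicator_of_mem (hiff.mpr ht), hf,
            Set.indicator_of_mem ht]
        · rw [Set.indicator_of_notMem (fun hc => ht (hiff.mp hc)), hf,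
            Set.indicator_of_notMem ht]
          simp [ENNReal.rpow_eq_zero_iff]
      unfold sqFn
      congr 1
      calc ∫⁻ t, (‖k (s - t) (f t)‖₊ : ℝ≥0∞) ^ (2:ℝ)
          = ∫⁻ t, (ball s (2*r)).indicator g (s - t) := by simp_rw [hpt]
        _ = ∫⁻ u, (ball s (2*r)).indicator g u :=
            (Measure.measurePreserving_sub_left volume s).lintegral_comp_emb
              (MeasurableEquiv.subLeft s).measurableEmbedding _
        _ = ∫⁻ u in ball s (2*r), g u := lintegral_indicator measurableSet_ball _
    have hsub : ball (0:Ed d) r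
        ⊆ {s | ENNReal.ofReal lam < sqFn (fun s t : Ed d => k (s - t)) f s} := by
      intro s hs
      have hball : ball (0:Ed d) r ⊆ ball s (2*r) := by
        intro u hu
        rw [mem_ball, dist_eq_norm]
        calc ‖u - s‖ ≤ ‖u‖ + ‖s‖ := norm_sub_le _ _
          _ < r + r := add_lt_add (mem_ball_zero_iff.mp hu) (mem_ball_zero_iff.mp hs)
          _ = 2 * r := by ring
      refine mem_setOf.mpr (lt_of_lt_of_le hlamB ?_)
      rw [hsq s]
      exact ENNReal.rpow_le_rpow (lintegral_mono_set hball) (by norm_num)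
    have hV2pos : 0 < volume (ball (0:Ed d) r) := measure_ball_pos _ _ hr
    have hV2top : volume (ball (0:Ed d) r) ≠ ⊤ := measure_ball_lt_top.ne
    have hV1 : volume (ball (0:Ed d) (2*r))
        = ENNReal.ofReal (2^d) * volume (ball (0:Ed d) r) := by
      rw [Measure.addHaar_ball volume _ (by positivity : (0:ℝ) ≤ 2*r),
        Measure.addHaar_ball volume (0:Ed d) hr.le, finrank_euclideanSpace_fin,
        mul_pow, ENNReal.ofReal_mul (by positivity), mul_assoc]
    have hfE : eLpNorm f (ENNReal.ofReal p) volume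
        = (‖x‖₊ : ℝ≥0∞) * volume (ball (0:Ed d) (2*r)) ^ (1/p) := by
      rw [hf, eLpNorm_indicator_const measurableSet_ball
        (by simp [ENNReal.ofReal_eq_zero, not_le, hp0] : ENNReal.ofReal p ≠ 0)
        ENNReal.ofReal_ne_top, ENNReal.toReal_ofReal hp0.le, enorm_eq_nnnorm]
    have hMeq : ENNReal.ofReal M
        = ENNReal.ofReal A * ((‖x‖₊ : ℝ≥0∞) * ENNReal.ofReal (2^d)) := by
      rw [← ENNReal.ofReal_coe_nnreal, coe_nnnorm, ← ENNReal.ofReal_mul (norm_nonneg x),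
        ← ENNReal.ofReal_mul hA.le]
      congr 1; rw [hMdef]; ring
    have hstep : ENNReal.ofReal lam * volume (ball (0:Ed d) r) ^ ((1:ℝ)/p)
        ≤ ENNReal.ofReal M * volume (ball (0:Ed d) r) ^ ((1:ℝ)/p) := by
      calc ENNReal.ofReal lam * volume (ball (0:Ed d) r) ^ ((1:ℝ)/p)
          ≤ ENNReal.ofReal lam *
            (volume {s | ENNReal.ofReal lam
              < sqFn (fun s t : Ed d => k (s - t)) f s}) ^ ((1:ℝ)/p) :=
            mul_le_mul' le_rfl
              (ENNReal.rpow_le_rpow (measure_mono hsub) (by positivity))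
        _ ≤ ENNReal.ofReal A * eLpNorm f (ENNReal.ofReal p) volume := hW
        _ = ENNReal.ofReal A * ((‖x‖₊ : ℝ≥0∞) *
              (ENNReal.ofReal (2^d) * volume (ball (0:Ed d) r)) ^ ((1:ℝ)/p)) := by
            rw [hfE, hV1]
        _ ≤ ENNReal.ofReal M * volume (ball (0:Ed d) r) ^ ((1:ℝ)/p) := by
            have hsplit : (ENNReal.ofReal (2^d) * volume (ball (0:Ed d) r)) ^ ((1:ℝ)/p)
                ≤ ENNReal.ofReal (2^d) * volume (ball (0:Ed d) r) ^ ((1:ℝ)/p) := by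
              rw [ENNReal.mul_rpow_of_nonneg _ _ (by positivity : (0:ℝ) ≤ 1/p)]
              refine mul_le_mul' ?_ le_rfl
              calc (ENNReal.ofReal (2^d)) ^ ((1:ℝ)/p)
                  ≤ (ENNReal.ofReal (2^d)) ^ (1:ℝ) := by
                    refine ENNReal.rpow_le_rpow_of_exponent_le ?_ ?_
                    · exact ENNReal.one_le_ofReal.mpr (one_le_pow₀ one_le_two)
                    · rw [div_le_one hp0]; linarith
                _ = ENNReal.ofReal (2^d) := ENNReal.rpow_one _
            calc ENNReal.ofReal A * ((‖x‖₊ : ℝ≥0∞) *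
                  (ENNReal.ofReal (2^d) * volume (ball (0:Ed d) r)) ^ ((1:ℝ)/p))
                ≤ ENNReal.ofReal A * ((‖x‖₊ : ℝ≥0∞) *
                    (ENNReal.ofReal (2^d) * volume (ball (0:Ed d) r) ^ ((1:ℝ)/p))) :=
                  mul_le_mul' le_rfl (mul_le_mul' le_rfl hsplit)
              _ = ENNReal.ofReal M * volume (ball (0:Ed d) r) ^ ((1:ℝ)/p) := by
                  rw [hMeq]; ring
    have hne : volume (ball (0:Ed d) r) ^ ((1:ℝ)/p) ≠ 0 :=
      (ENNReal.rpow_pos hV2pos hV2top).ne'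
    have hnt' : volume (ball (0:Ed d) r) ^ ((1:ℝ)/p) ≠ ⊤ :=
      ENNReal.rpow_ne_top_of_nonneg (by positivity) hV2top
    exact absurd hMlam (not_lt.mpr ((ENNReal.mul_le_mul_iff_left hne hnt').mp hstep))
  have hU : (∫⁻ t, g t) ≤ ENNReal.ofReal M ^ (2:ℝ) := by
    have h1 : (∫⁻ t, g t) = volume.withDensity g Set.univ := by
      rw [withDensity_apply _ MeasurableSet.univ, Measure.restrict_univ]
    rw [h1, ← Metric.iUnion_ball_nat_succ (0:Ed d),
      Monotone.measure_iUnion (fun m n hmn => Metric.ball_subset_ball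
        (by exact_mod_cast Nat.succ_le_succ hmn))]
    refine iSup_le fun n => ?_
    rw [withDensity_apply _ measurableSet_ball]
    exact key ((n:ℝ)+1) (by positivity)
  have h2 := ENNReal.rpow_le_rpow hU (by norm_num : (0:ℝ) ≤ 1/2)
  rwa [← ENNReal.rpow_mul, show (2:ℝ) * (1/2) = 1 by norm_num,
    ENNReal.rpow_one] at h2
end
end

section
/- Let X be a Hilbert space, let d ≥ 1 and p ∈ [2,∞), and let k : ℝ^d → ℂ be measurable. Then there exists C > 0 such that ‖ s ↦ (∫_{ℝ^d} |k(s−t)|²‖f(t)‖_X² dt)^{1/2} ‖_{L^p(ℝ^d)} ≤ C·‖f‖_{L^p(ℝ^d;X)} for all f ∈ L^p(ℝ^d;X) if and only if k ∈ L²(ℝ^d); moreover, if k ∈ L²(ℝ^d) then the estimate holds with C = ‖k‖_{L²(ℝ^d)}. -/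
open MeasureTheory ENNReal Metric Set

noncomputable section

lemma aux_holder {α : Type*} [MeasurableSpace α] (μ : Measure α) {q : ℝ} (hq : 1 < q)
    {g H : α → ℝ≥0∞} (hg : Measurable g) (hH : Measurable H) :
    (∫⁻ u, g u * H u ∂μ) ^ q ≤ (∫⁻ u, g u ∂μ) ^ (q - 1) * ∫⁻ u, g u * H u ^ q ∂μ := by
  set q' : ℝ := q.conjExponent with hq'def
  have hc : q'.HolderConjugate q := (Real.HolderConjugate.conjExponent hq).symm
  have h1 : ∫⁻ u, g u * H u ∂μ
      = ∫⁻ u, ((fun u => g u ^ ((1:ℝ)/q')) * (fun u => g u ^ ((1:ℝ)/q) * H u)) u ∂μ := by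
    refine lintegral_congr fun u => ?_
    simp only [Pi.mul_apply]
    rw [← mul_assoc, ← ENNReal.rpow_add_of_nonneg _ _ hc.one_div_nonneg hc.symm.one_div_nonneg,
      one_div, one_div, hc.inv_add_inv_eq_one, ENNReal.rpow_one]
  have h2 := ENNReal.lintegral_mul_le_Lp_mul_Lq μ hc (f := fun u => g u ^ ((1:ℝ)/q'))
    (g := fun u => g u ^ ((1:ℝ)/q) * H u)
    ((hg.pow_const ((1:ℝ)/q')).aemeasurable) (((hg.pow_const ((1:ℝ)/q)).mul hH).aemeasurable)
  rw [← h1] at h2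
  have e1 : ∫⁻ u, (g u ^ ((1:ℝ)/q')) ^ q' ∂μ = ∫⁻ u, g u ∂μ := by
    refine lintegral_congr fun u => ?_
    rw [← ENNReal.rpow_mul, one_div_mul_cancel hc.ne_zero, ENNReal.rpow_one]
  have e2 : ∫⁻ u, (g u ^ ((1:ℝ)/q) * H u) ^ q ∂μ = ∫⁻ u, g u * H u ^ q ∂μ := by
    refine lintegral_congr fun u => ?_
    rw [ENNReal.mul_rpow_of_nonneg _ _ hc.symm.nonneg, ← ENNReal.rpow_mul,
      one_div_mul_cancel hc.symm.ne_zero, ENNReal.rpow_one]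
  rw [e1, e2] at h2
  have harith : (1:ℝ)/q' * q = q - 1 := by
    rw [mul_comm, mul_one_div, hc.symm.div_conj_eq_sub_one]
  calc (∫⁻ u, g u * H u ∂μ) ^ q
      ≤ ((∫⁻ u, g u ∂μ) ^ ((1:ℝ)/q') * (∫⁻ u, g u * H u ^ q ∂μ) ^ ((1:ℝ)/q)) ^ q :=
        ENNReal.rpow_le_rpow h2 hc.symm.nonneg
    _ = (∫⁻ u, g u ∂μ) ^ (q - 1) * ∫⁻ u, g u * H u ^ q ∂μ := by
        rw [ENNReal.mul_rpow_of_nonneg _ _ hc.symm.nonneg, ← ENNReal.rpow_mul,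
          ← ENNReal.rpow_mul, harith, one_div_mul_cancel hc.symm.ne_zero, ENNReal.rpow_one]

lemma young {d : ℕ} {q : ℝ} (hq : 1 ≤ q) (g h : Ed d → ℝ≥0∞)
    (hg : Measurable g) (hh : Measurable h) :
    ∫⁻ s, (∫⁻ t, g (s - t) * h t) ^ q ≤ (∫⁻ u, g u) ^ q * ∫⁻ t, h t ^ q := by
  have hsub : Measurable fun z : Ed d × Ed d => z.1 - z.2 := measurable_fst.sub measurable_snd
  have hinner : ∀ s : Ed d, ∫⁻ t, g (s - t) * h t = ∫⁻ u, g u * h (s - u) := by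
    intro s
    have hm : Measurable fun u : Ed d => g u * h (s - u) :=
      hg.mul (hh.comp (measurable_const.sub measurable_id))
    have := (Measure.measurePreserving_sub_left (volume : Measure (Ed d)) s).lintegral_comp hm
    simpa [sub_sub_cancel] using this
    
  have hmeas_pr : Measurable fun z : Ed d × Ed d => g z.2 * h (z.1 - z.2) ^ q :=
    (hg.comp measurable_snd).mul ((hh.comp hsub).pow_const q)
  have hmeas_outer : Measurable fun s => ∫⁻ u, g u * h (s - u) ^ q :=
    hmeas_pr.lintegral_prod_right'
  have hswap : ∫⁻ s, ∫⁻ u, g u * h (s - u) ^ q = (∫⁻ u, g u) * ∫⁻ t, h t ^ q := by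
    rw [lintegral_lintegral_swap hmeas_pr.aemeasurable]
    have hx : ∀ u : Ed d, ∫⁻ s, g u * h (s - u) ^ q = g u * ∫⁻ t, h t ^ q := by
      intro u
      have hm2 : Measurable fun s : Ed d => h (s - u) ^ q :=
        (hh.comp (measurable_id.sub measurable_const)).pow_const q
      rw [lintegral_const_mul _ hm2]
      congr 1
      exact (measurePreserving_sub_right (volume : Measure (Ed d)) u).lintegral_comp
        (hh.pow_const q)
    simp_rw [hx]
    rw [lintegral_mul_const _ hg]
  rcases hq.eq_or_lt with rfl | hq1
  · simp only [ENNReal.rpow_one] at hswap ⊢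
    simp_rw [hinner]
    exact hswap.le
  · calc ∫⁻ s, (∫⁻ t, g (s - t) * h t) ^ q
        = ∫⁻ s, (∫⁻ u, g u * h (s - u)) ^ q := by simp_rw [hinner]
      _ ≤ ∫⁻ s, (∫⁻ u, g u) ^ (q - 1) * ∫⁻ u, g u * h (s - u) ^ q :=
          lintegral_mono fun s => aux_holder volume hq1 hg
            (hh.comp (measurable_const.sub measurable_id))
      _ = (∫⁻ u, g u) ^ (q - 1) * ∫⁻ s, ∫⁻ u, g u * h (s - u) ^ q :=
          lintegral_const_mul _ hmeas_outer
      _ = (∫⁻ u, g u) ^ q * ∫⁻ t, h t ^ q := by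
          rw [hswap, ← mul_assoc]
          congr 1
          nth_rewrite 2 [← ENNReal.rpow_one (∫⁻ u, g u)]
          rw [← ENNReal.rpow_add_of_nonneg _ _ (by linarith) zero_le_one, sub_add_cancel]

lemma bound_part {X : Type} [NormedAddCommGroup X]
    (d : ℕ) (p : ℝ) (hp : 2 ≤ p) (k : Ed d → ℂ) (hk : Measurable k)
    (f : Ed d → X) (hf : AEStronglyMeasurable f volume) :
    (∫⁻ s, (∫⁻ t, (‖k (s - t)‖₊ : ℝ≥0∞) ^ (2:ℝ) * (‖f t‖₊ : ℝ≥0∞) ^ (2:ℝ)) ^ (p/2))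
        ^ ((1:ℝ)/p)
      ≤ eLpNorm k 2 volume * eLpNorm f (ENNReal.ofReal p) volume := by
  have hp0 : (0:ℝ) < p := by linarith
  set F := hf.mk f with hFdef
  have hFf : f =ᵐ[volume] F := hf.ae_eq_mk
  have hF : StronglyMeasurable F := hf.stronglyMeasurable_mk
  set g : Ed d → ℝ≥0∞ := fun u => (‖k u‖₊ : ℝ≥0∞) ^ (2:ℝ) with hgdef
  set h : Ed d → ℝ≥0∞ := fun t => (‖F t‖₊ : ℝ≥0∞) ^ (2:ℝ) with hhdef
  have hg : Measurable g := hk.nnnorm.coe_nnreal_ennreal.pow_const _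
  have hh : Measurable h := hF.nnnorm.measurable.coe_nnreal_ennreal.pow_const _
  have hcongr : ∀ s : Ed d,
      ∫⁻ t, (‖k (s - t)‖₊ : ℝ≥0∞) ^ (2:ℝ) * (‖f t‖₊ : ℝ≥0∞) ^ (2:ℝ)
        = ∫⁻ t, g (s - t) * h t := by
    intro s
    refine lintegral_congr_ae (hFf.mono fun t ht => ?_)
    rw [hgdef, hhdef]
    simp only []
    rw [ht]
  have hy := young (q := p/2) (by linarith) g h hg hh
  have step : (∫⁻ s, (∫⁻ t, g (s - t) * h t) ^ (p/2)) ^ ((1:ℝ)/p)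
      ≤ ((∫⁻ u, g u) ^ (p/2) * ∫⁻ t, h t ^ (p/2)) ^ ((1:ℝ)/p) :=
    ENNReal.rpow_le_rpow hy (by positivity)
  have harith : p/2 * (1/p) = 1/2 := by field_simp
  have hrw : ((∫⁻ u, g u) ^ (p/2) * ∫⁻ t, h t ^ (p/2)) ^ ((1:ℝ)/p)
      = (∫⁻ u, g u) ^ ((1:ℝ)/2) * (∫⁻ t, h t ^ (p/2)) ^ ((1:ℝ)/p) := by
    rw [ENNReal.mul_rpow_of_nonneg _ _ (by positivity), ← ENNReal.rpow_mul, harith]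
  have ek : eLpNorm k 2 volume = (∫⁻ u, g u) ^ ((1:ℝ)/2) := by
    rw [eLpNorm_eq_lintegral_rpow_enorm_toReal two_ne_zero ENNReal.ofNat_ne_top]
    simp [hgdef]
    rfl
  have ef : eLpNorm f (ENNReal.ofReal p) volume = (∫⁻ t, h t ^ (p/2)) ^ ((1:ℝ)/p) := by
    rw [eLpNorm_congr_ae hFf,
      eLpNorm_eq_lintegral_rpow_enorm_toReal (ENNReal.ofReal_pos.mpr hp0).ne' ENNReal.ofReal_ne_top,
      ENNReal.toReal_ofReal hp0.le]
    congr 1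
    refine lintegral_congr fun t => ?_
    rw [hhdef]
    simp only []
    rw [← ENNReal.rpow_mul]
    norm_num
    rw [mul_div_cancel₀]
    norm_num
    exacts [rfl, two_ne_zero]
  calc (∫⁻ s, (∫⁻ t, (‖k (s - t)‖₊ : ℝ≥0∞) ^ (2:ℝ) * (‖f t‖₊ : ℝ≥0∞) ^ (2:ℝ)) ^ (p/2))
        ^ ((1:ℝ)/p)
      = (∫⁻ s, (∫⁻ t, g (s - t) * h t) ^ (p/2)) ^ ((1:ℝ)/p) := by simp_rw [hcongr]
    _ ≤ _ := step.trans (le_of_eq hrw)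
    _ = _ := by rw [ek, ef]

/-- for a Hilbert space `X` and a scalar convolution kernel `k`, the square
function operator is `L^p`-bounded iff `k ∈ L²(ℝ^d)`; in that case `C = ‖k‖_{L²}` works. -/
theorem statement5 {X : Type} [NormedAddCommGroup X] [InnerProductSpace ℝ X]
    [CompleteSpace X] [Nontrivial X]
    (d : ℕ) (hd : 1 ≤ d) (p : ℝ) (hp : 2 ≤ p) (k : Ed d → ℂ) (hk : Measurable k) :
    ((∃ C : ℝ, 0 < C ∧ ∀ f : Ed d → X, AEStronglyMeasurable f volume →
        (∫⁻ s, (∫⁻ t, (‖k (s - t)‖₊ : ℝ≥0∞) ^ (2:ℝ) * (‖f t‖₊ : ℝ≥0∞) ^ (2:ℝ)) ^ (p/2))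
            ^ ((1:ℝ)/p)
          ≤ ENNReal.ofReal C * eLpNorm f (ENNReal.ofReal p) volume)
      ↔ MemLp k 2 (volume : Measure (Ed d))) ∧
    (MemLp k 2 (volume : Measure (Ed d)) →
      ∀ f : Ed d → X, AEStronglyMeasurable f volume →
        (∫⁻ s, (∫⁻ t, (‖k (s - t)‖₊ : ℝ≥0∞) ^ (2:ℝ) * (‖f t‖₊ : ℝ≥0∞) ^ (2:ℝ)) ^ (p/2))
            ^ ((1:ℝ)/p)
          ≤ eLpNorm k 2 volume * eLpNorm f (ENNReal.ofReal p) volume) := by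
  have hp0 : (0:ℝ) < p := by linarith
  have key := fun f hf => bound_part (X := X) d p hp k hk f hf
  haveI : Nontrivial (Ed d) :=
    Module.nontrivial_of_finrank_pos (R := ℝ)
      (by rw [finrank_euclideanSpace_fin]; omega)
  refine ⟨⟨?_, ?_⟩, fun _ => key⟩
  · rintro ⟨C, hC, hbound⟩
    obtain ⟨x, hx⟩ := exists_ne (0 : X)
    set e : X := (‖x‖:ℝ)⁻¹ • x with hedef
    have he : ‖e‖ = 1 := by
      rw [hedef]
      exact norm_smul_inv_norm hx
    have hen : (‖e‖₊ : ℝ≥0∞) = 1 := by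
      have : ‖e‖₊ = 1 := by ext; simp [coe_nnnorm, he]
      rw [this]; simp
    set g : Ed d → ℝ≥0∞ := fun u => (‖k u‖₊ : ℝ≥0∞) ^ (2:ℝ) with hgdef
    have hg : Measurable g := hk.nnnorm.coe_nnreal_ennreal.pow_const _
    set B : ℝ≥0∞ := ENNReal.ofReal C * ENNReal.ofReal (2^d) ^ ((1:ℝ)/p) with hBdef
    have hBtop : B ^ (2:ℝ) ≠ ∞ := by
      refine (ENNReal.rpow_lt_top_of_nonneg (by norm_num) ?_).ne
      rw [hBdef]
      exact (ENNReal.mul_lt_top ENNReal.ofReal_lt_top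
        (ENNReal.rpow_lt_top_of_nonneg (by positivity) ENNReal.ofReal_ne_top)).ne
    have key2 : ∀ r : ℝ, 0 < r → ∫⁻ u in ball (0:Ed d) r, g u ≤ B ^ (2:ℝ) := by
      intro r hr
      set f : Ed d → X := (ball (0:Ed d) (2*r)).indicator (fun _ => e) with hfdef
      have hfm : AEStronglyMeasurable f volume :=
        (stronglyMeasurable_const.indicator measurableSet_ball).aestronglyMeasurable
      have hb := hbound f hfm
      set A : ℝ≥0∞ := ∫⁻ u in ball (0:Ed d) r, g u with hAdef
      have hfn : ∀ t, (‖f t‖₊ : ℝ≥0∞) ^ (2:ℝ)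
          = (ball (0:Ed d) (2*r)).indicator (fun _ => (1:ℝ≥0∞)) t := by
        intro t
        by_cases ht : t ∈ ball (0:Ed d) (2*r)
        · rw [hfdef]
          simp only [Set.indicator_of_mem ht]
          rw [hen]
          exact ENNReal.one_rpow _
        · rw [hfdef]
          simp only [Set.indicator_of_notMem ht, nnnorm_zero, ENNReal.coe_zero]
          exact ENNReal.zero_rpow_of_pos (by norm_num)
      have hinner : ∀ s ∈ ball (0:Ed d) r,
          A ≤ ∫⁻ t, (‖k (s - t)‖₊ : ℝ≥0∞) ^ (2:ℝ) * (‖f t‖₊ : ℝ≥0∞) ^ (2:ℝ) := by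
        intro s hs
        have hsubset : ball s r ⊆ ball (0:Ed d) (2*r) := by
          intro y hy
          rw [mem_ball] at hy hs ⊢
          calc dist y 0 ≤ dist y s + dist s 0 := dist_triangle _ _ _
            _ < r + r := add_lt_add hy hs
            _ = 2*r := by ring
        have hpre : (fun t : Ed d => s - t) ⁻¹' ball (0:Ed d) r = ball s r := by
          ext t
          simp only [mem_preimage, mem_ball, dist_eq_norm, sub_zero]
          rw [norm_sub_rev]
        have hcv : A = ∫⁻ t in ball s r, g (s - t) := by
          have := (Measure.measurePreserving_sub_left (volume : Measure (Ed d)) s)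
            |>.setLIntegral_comp_preimage_emb
              (MeasurableEquiv.subLeft s).measurableEmbedding g (ball (0:Ed d) r)
          rw [hAdef, ← this, hpre]
        rw [hcv]
        calc ∫⁻ t in ball s r, g (s - t)
            = ∫⁻ t, (ball s r).indicator (fun t => g (s - t)) t :=
              (lintegral_indicator measurableSet_ball _).symm
          _ ≤ ∫⁻ t, (‖k (s - t)‖₊ : ℝ≥0∞) ^ (2:ℝ) * (‖f t‖₊ : ℝ≥0∞) ^ (2:ℝ) := by
              refine lintegral_mono fun t => ?_
              rw [hfn t]
              by_cases ht : t ∈ ball s r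
              · rw [Set.indicator_of_mem ht, Set.indicator_of_mem (hsubset ht), mul_one]
              · rw [Set.indicator_of_notMem ht]
                exact zero_le
      have h1 : A ^ (p/2) * volume (ball (0:Ed d) r)
          ≤ ∫⁻ s, (∫⁻ t, (‖k (s - t)‖₊ : ℝ≥0∞) ^ (2:ℝ) * (‖f t‖₊ : ℝ≥0∞) ^ (2:ℝ)) ^ (p/2) := by
        calc A ^ (p/2) * volume (ball (0:Ed d) r)
            = ∫⁻ _ in ball (0:Ed d) r, A ^ (p/2) := (setLIntegral_const _ _).symm
          _ ≤ ∫⁻ s in ball (0:Ed d) r,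
                (∫⁻ t, (‖k (s - t)‖₊ : ℝ≥0∞) ^ (2:ℝ) * (‖f t‖₊ : ℝ≥0∞) ^ (2:ℝ)) ^ (p/2) :=
              setLIntegral_mono' measurableSet_ball fun s hs =>
                ENNReal.rpow_le_rpow (hinner s hs) (by linarith)
          _ ≤ _ := setLIntegral_le_lintegral _ _
      have hrhs : eLpNorm f (ENNReal.ofReal p) volume
          = (volume (ball (0:Ed d) (2*r))) ^ ((1:ℝ)/p) := by
        rw [hfdef, eLpNorm_indicator_const measurableSet_ball
          (ENNReal.ofReal_pos.mpr hp0).ne' ENNReal.ofReal_ne_top,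
          ENNReal.toReal_ofReal hp0.le, (show ‖e‖ₑ = 1 from hen), one_mul]
      have hvol : volume (ball (0:Ed d) (2*r))
          = ENNReal.ofReal (2^d) * volume (ball (0:Ed d) r) := by
        rw [Measure.addHaar_ball volume (0:Ed d) (by linarith : (0:ℝ) ≤ 2*r),
          Measure.addHaar_ball volume (0:Ed d) hr.le]
        simp only [finrank_euclideanSpace_fin]
        rw [mul_pow, ENNReal.ofReal_mul (by positivity), mul_assoc]
      have h2 : A ^ ((1:ℝ)/2) * (volume (ball (0:Ed d) r)) ^ ((1:ℝ)/p)
          ≤ B * (volume (ball (0:Ed d) r)) ^ ((1:ℝ)/p) := by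
        have harith : p/2 * ((1:ℝ)/p) = 1/2 := by field_simp
        calc A ^ ((1:ℝ)/2) * (volume (ball (0:Ed d) r)) ^ ((1:ℝ)/p)
            = (A ^ (p/2) * volume (ball (0:Ed d) r)) ^ ((1:ℝ)/p) := by
              rw [ENNReal.mul_rpow_of_nonneg _ _ (by positivity), ← ENNReal.rpow_mul, harith]
          _ ≤ (∫⁻ s, (∫⁻ t, (‖k (s - t)‖₊ : ℝ≥0∞) ^ (2:ℝ) * (‖f t‖₊ : ℝ≥0∞) ^ (2:ℝ)) ^ (p/2))
                ^ ((1:ℝ)/p) := ENNReal.rpow_le_rpow h1 (by positivity)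
          _ ≤ ENNReal.ofReal C * eLpNorm f (ENNReal.ofReal p) volume := hb
          _ = B * (volume (ball (0:Ed d) r)) ^ ((1:ℝ)/p) := by
              rw [hrhs, hvol, ENNReal.mul_rpow_of_nonneg _ _ (by positivity), hBdef, mul_assoc]
      have hV0 : (volume (ball (0:Ed d) r)) ^ ((1:ℝ)/p) ≠ 0 :=
        (ENNReal.rpow_pos (Metric.measure_ball_pos volume 0 hr) measure_ball_lt_top.ne).ne'
      have hVtop : (volume (ball (0:Ed d) r)) ^ ((1:ℝ)/p) ≠ ∞ :=
        ENNReal.rpow_ne_top_of_nonneg (by positivity) measure_ball_lt_top.ne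
      have h3 : A ^ ((1:ℝ)/2) ≤ B := (ENNReal.mul_le_mul_iff_left hV0 hVtop).mp h2
      calc A = (A ^ ((1:ℝ)/2)) ^ (2:ℝ) := by rw [← ENNReal.rpow_mul]; norm_num
        _ ≤ B ^ (2:ℝ) := ENNReal.rpow_le_rpow h3 (by norm_num)
    have htot : ∫⁻ u, g u ≤ B ^ (2:ℝ) := by
      have hmono : Monotone fun n : ℕ => (ball (0:Ed d) n).indicator g := fun m n hmn =>
        Set.indicator_le_indicator_of_subset
          (ball_subset_ball (by exact_mod_cast hmn)) (fun _ => zero_le)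
      have hsup : ∀ u, (⨆ n : ℕ, (ball (0:Ed d) n).indicator g u) = g u := by
        intro u
        refine le_antisymm (iSup_le fun n => Set.indicator_le_self _ _ u) ?_
        refine le_iSup_of_le (⌊‖u‖⌋₊ + 1) ?_
        rw [Set.indicator_of_mem (mem_ball_zero_iff.mpr ?_)]
        push_cast
        exact Nat.lt_floor_add_one _
      calc ∫⁻ u, g u = ∫⁻ u, ⨆ n : ℕ, (ball (0:Ed d) n).indicator g u :=
            lintegral_congr fun u => (hsup u).symm
        _ = ⨆ n : ℕ, ∫⁻ u, (ball (0:Ed d) n).indicator g u :=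
            lintegral_iSup (fun n => hg.indicator measurableSet_ball) hmono
        _ ≤ B ^ (2:ℝ) := by
            refine iSup_le fun n => ?_
            rw [lintegral_indicator measurableSet_ball]
            rcases Nat.eq_zero_or_pos n with rfl | hn
            · simp
            · exact key2 n (by exact_mod_cast hn)
    refine ⟨hk.aestronglyMeasurable, ?_⟩
    rw [eLpNorm_eq_lintegral_rpow_enorm_toReal two_ne_zero ENNReal.ofNat_ne_top]
    simp only [ENNReal.toReal_ofNat]
    exact ENNReal.rpow_lt_top_of_nonneg (by norm_num) (ne_top_of_le_ne_top hBtop htot)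
  · intro hk2
    refine ⟨(eLpNorm k 2 volume).toReal + 1, by positivity, fun f hf => ?_⟩
    refine (key f hf).trans (mul_le_mul_left ?_ _)
    calc eLpNorm k 2 volume = ENNReal.ofReal (eLpNorm k 2 volume).toReal :=
          (ENNReal.ofReal_toReal hk2.2.ne).symm
      _ ≤ ENNReal.ofReal ((eLpNorm k 2 volume).toReal + 1) :=
          ENNReal.ofReal_le_ofReal (by linarith)
end
end

section
/- Let d ≥ 1, T ∈ (0,∞], let D ⊆ ℝ^d be measurable, let ε ∈ (0,1] and A₀ > 0, and let K : (0,T) × (0,T) × D × D → ℂ be measurable. Denote by |(t,x)|_{(2,1)} := max(|t|^{1/2}, |x|) the parabolic norm on ℝ × ℝ^d. Assume that |K(t,s,x,y) − K(t',s,x',y)| ≤ A₀ · |(t−t', x−x')|_{(2,1)}^{ε} / |(t−s, x−y)|_{(2,1)}^{ε+d+1} whenever |(t−t', x−x')|_{(2,1)} ≤ ½·|(t−s, x−y)|_{(2,1)}. Then there exists a constant C depending only on ε and d such that for all (t,x), (t',x') ∈ (0,T) × D: ( ∫₀^T ( ∫_{I(s)} |K(t,s,x,y) − K(t',s,x',y)|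 dy )² ds )^{1/2} ≤ C·A₀, where I(s) := { y ∈ D : |(t−t', x−x')|_{(2,1)} ≤ ½·|(t−s, x−y)|_{(2,1)} }. -/
open MeasureTheory ENNReal Metric Set

noncomputable section

/-- The parabolic norm `|(t,x)|_{(2,1)} = max(|t|^{1/2}, |x|)` on `ℝ × ℝ^d`. -/
def pnorm {d : ℕ} (t : ℝ) (x : Ed d) : ℝ := max (Real.sqrt |t|) ‖x‖

lemma layercake_bound {α : Type*} [MeasurableSpace α] (μ : Measure α) [SFinite μ]
    (f : α → ℝ) (hf : Measurable f) (hf0 : ∀ x, 0 ≤ f x)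
    (M c q : ℝ) (hM : 0 < M) (hc : 0 ≤ c) (hq1 : q < 1)
    (hbound : ∀ x, f x ≤ M)
    (hlevel : ∀ l : ℝ, 0 < l → μ {x | l < f x} ≤ ENNReal.ofReal (c * l ^ (-q))) :
    ∫⁻ x, ENNReal.ofReal (f x) ∂μ ≤ ENNReal.ofReal (c * M ^ (1 - q) / (1 - q)) := by
  rw [lintegral_eq_lintegral_meas_lt μ (ae_of_all _ hf0) hf.aemeasurable]
  have hsplit : (Ioi (0:ℝ)) = Ioc 0 M ∪ Ioi M := (Ioc_union_Ioi_eq_Ioi hM.le).symm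
  rw [hsplit, lintegral_union measurableSet_Ioi Ioc_disjoint_Ioi_same]
  have h2 : ∫⁻ t in Ioi M, μ {a | t < f a} = 0 := by
    rw [setLIntegral_congr_fun measurableSet_Ioi
      (fun t (ht : t ∈ Ioi M) => ?_), lintegral_zero]
    have he : {a | t < f a} = ∅ := by
      ext a; simp only [mem_setOf_eq, mem_empty_iff_false, iff_false, not_lt]
      exact (hbound a).trans (le_of_lt ht)
    simp only [he, measure_empty, Pi.zero_apply]
  rw [h2, add_zero]
  have h1 : ∫⁻ t in Ioc (0:ℝ) M, μ {a | t < f a}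
      ≤ ∫⁻ t in Ioc (0:ℝ) M, ENNReal.ofReal (c * t ^ (-q)) := by
    refine setLIntegral_mono (by fun_prop) (fun t ht => hlevel t ht.1)
  refine h1.trans (le_of_eq ?_)
  have hint : IntegrableOn (fun t : ℝ => c * t ^ (-q)) (Ioc 0 M) := by
    rw [← intervalIntegrable_iff_integrableOn_Ioc_of_le hM.le]
    exact (intervalIntegral.intervalIntegrable_rpow' (by linarith)).const_mul c
  have hnn : 0 ≤ᵐ[volume.restrict (Ioc (0:ℝ) M)] fun t : ℝ => c * t ^ (-q) :=
    (ae_restrict_iff' measurableSet_Ioc).2 (ae_of_all _ fun t ht =>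
      mul_nonneg hc (Real.rpow_nonneg ht.1.le _))
  rw [← ofReal_integral_eq_lintegral_ofReal hint hnn]
  congr 1
  rw [← intervalIntegral.integral_of_le hM.le, intervalIntegral.integral_const_mul,
    integral_rpow (Or.inl (by linarith))]
  rw [Real.zero_rpow (by linarith : -q + 1 ≠ 0)]
  have h3 : -q + 1 = 1 - q := by ring
  rw [h3, sub_zero, mul_div_assoc]

/-- parabolic Hörmander-type estimate. If a measurable kernel `K` on
`(0,T) × (0,T) × D × D` satisfies the parabolic `ε`-standard regularity estimate, then
the `L²`-in-time, `L¹`-in-space oscillation integral is bounded by `C(ε,d)·A₀`. -/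
theorem statement19 (d : ℕ) (hd : 1 ≤ d) (ε : ℝ) (hε : 0 < ε) (hε1 : ε ≤ 1) :
    ∃ C : ℝ, 0 < C ∧
      ∀ (T : ℝ≥0∞), 0 < T → ∀ (D : Set (Ed d)), MeasurableSet D →
      ∀ K : ℝ → ℝ → Ed d → Ed d → ℂ,
        Measurable (fun q : (ℝ × ℝ) × Ed d × Ed d => K q.1.1 q.1.2 q.2.1 q.2.2) →
      ∀ A₀ : ℝ, 0 < A₀ →
      -- parabolic regularity hypothesis
      (∀ (t t' s : ℝ) (x x' y : Ed d),
        0 < t → ENNReal.ofReal t < T → 0 < t' → ENNReal.ofReal t' < T →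
        0 < s → ENNReal.ofReal s < T → x ∈ D → x' ∈ D → y ∈ D →
        pnorm (t - t') (x - x') ≤ pnorm (t - s) (x - y) / 2 →
        ‖K t s x y - K t' s x' y‖ ≤
          A₀ * pnorm (t - t') (x - x') ^ ε / pnorm (t - s) (x - y) ^ (ε + (d:ℝ) + 1)) →
      -- conclusion
      ∀ (t t' : ℝ) (x x' : Ed d),
        0 < t → ENNReal.ofReal t < T → 0 < t' → ENNReal.ofReal t' < T →
        x ∈ D → x' ∈ D →
        (∫⁻ s in {s : ℝ | 0 < s ∧ ENNReal.ofReal s < T},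
            (∫⁻ y in {y : Ed d |
                y ∈ D ∧ pnorm (t - t') (x - x') ≤ pnorm (t - s) (x - y) / 2},
              (‖K t s x y - K t' s x' y‖₊ : ℝ≥0∞)) ^ (2:ℝ)) ^ ((1:ℝ)/2)
          ≤ ENNReal.ofReal (C * A₀) := by
  have hd0 : 0 < d := hd
  haveI : Nontrivial (Ed d) := by
    refine ⟨0, EuclideanSpace.single (⟨0, hd0⟩ : Fin d) (1:ℝ), fun h => ?_⟩
    have := congrArg (fun v : Ed d => v ⟨0, hd0⟩) h
    simp [EuclideanSpace.single_apply] at this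
  set p : ℝ := ε + (d:ℝ) + 1 with hpdef
  have hp0 : 0 < p := by positivity
  have hdp : (d:ℝ) < p := by simp only [hpdef]; linarith
  set q1 : ℝ := (d:ℝ) / p with hq1def
  have hq10 : 0 ≤ q1 := by positivity
  have hq1lt : q1 < 1 := (div_lt_one hp0).2 hdp
  set κ : ℝ := (volume (ball (0:Ed d) 1)).toReal with hκdef
  have hκ : 0 < κ := ENNReal.toReal_pos (measure_ball_pos volume 0 one_pos).ne'
    measure_ball_lt_top.ne
  have hκball : volume (ball (0:Ed d) 1) = ENNReal.ofReal κ :=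
    (ENNReal.ofReal_toReal measure_ball_lt_top.ne).symm
  set κ' : ℝ := κ / (1 - q1) with hκ'def
  have hκ' : 0 < κ' := div_pos hκ (by linarith)
  refine ⟨κ' * Real.sqrt (2 * (ε+1) / ε), mul_pos hκ' (Real.sqrt_pos.2 (by positivity)), ?_⟩
  set C : ℝ := κ' * Real.sqrt (2 * (ε+1) / ε) with hCdef
  have hC : 0 < C := mul_pos hκ' (Real.sqrt_pos.2 (by positivity))
  intro T hT D hD K hK A₀ hA₀ hreg t t' x x' ht htT ht' ht'T hx hx'
  set δ : ℝ := pnorm (t - t') (x - x') with hδdef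
  have hδ0 : 0 ≤ δ := le_trans (Real.sqrt_nonneg _) (le_max_left _ _)
  rcases eq_or_lt_of_le hδ0 with hδ | hδ
  · -- δ = 0 : t = t', x = x'
    have hsq : Real.sqrt |t - t'| = 0 :=
      le_antisymm (hδ ▸ le_max_left _ _) (Real.sqrt_nonneg _)
    have hxx : ‖x - x'‖ = 0 := le_antisymm (hδ ▸ le_max_right _ _) (norm_nonneg _)
    have htt : t = t' := by
      have := (Real.sqrt_eq_zero (abs_nonneg _)).1 hsq
      have := abs_eq_zero.1 this
      linarith [sub_eq_zero.1 this]
    have hxx' : x = x' := sub_eq_zero.1 (norm_eq_zero.1 hxx)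
    subst htt; subst hxx'
    have hz : (∫⁻ s in {s : ℝ | 0 < s ∧ ENNReal.ofReal s < T},
        (∫⁻ y in {y : Ed d | y ∈ D ∧ δ ≤ pnorm (t - s) (x - y) / 2},
          (‖K t s x y - K t s x y‖₊ : ℝ≥0∞)) ^ (2:ℝ)) = 0 := by
      simp [sub_self, ENNReal.zero_rpow_of_pos (by norm_num : (0:ℝ) < 2)]
    rw [hz, ENNReal.zero_rpow_of_pos (by norm_num : (0:ℝ) < 1/2)]
    exact zero_le
  · -- main case δ > 0
    set k : ℝ := κ' * (A₀ * δ ^ ε) with hkdef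
    have hδε : 0 < δ ^ ε := Real.rpow_pos_of_pos hδ ε
    have hk : 0 < k := by positivity
    set b : ℝ → ℝ := fun s => max (Real.sqrt |t - s|) (2 * δ) with hbdef
    have hb : ∀ s, 0 < b s := fun s => lt_of_lt_of_le (by linarith) (le_max_right _ _)
    set G : ℝ → ℝ := fun s => k * (b s) ^ (-(ε+1)) with hGdef
    set F : ℝ → ℝ := fun s => k^2 * (max |t - s| (4 * δ^2)) ^ (-(ε+1)) with hFdef
    -- inner estimate
    have hinner : ∀ s : ℝ, 0 < s → ENNReal.ofReal s < T →
        (∫⁻ y in {y : Ed d | y ∈ D ∧ δ ≤ pnorm (t - s) (x - y) / 2},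
          (‖K t s x y - K t' s x' y‖₊ : ℝ≥0∞)) ≤ ENNReal.ofReal (G s) := by
      intro s hs hsT
      set a : ℝ := Real.sqrt |t - s| with hadef
      have ha0 : 0 ≤ a := Real.sqrt_nonneg _
      set Cd : ℝ := A₀ * δ ^ ε with hCddef
      have hCd : 0 < Cd := by positivity
      set M : ℝ := Cd * (b s) ^ (-p) with hMdef
      have hM : 0 < M := mul_pos hCd (Real.rpow_pos_of_pos (hb s) _)
      set f : Ed d → ℝ := fun y => min (Cd * (max a ‖x - y‖) ^ (-p)) M with hfdef
      have hf0 : ∀ y, 0 ≤ f y := fun y =>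
        le_min (mul_nonneg hCd.le (Real.rpow_nonneg (le_trans ha0 (le_max_left _ _)) _)) hM.le
      have hfmeas : Measurable f := by fun_prop
      have step1 : (∫⁻ y in {y : Ed d | y ∈ D ∧ δ ≤ pnorm (t - s) (x - y) / 2},
          (‖K t s x y - K t' s x' y‖₊ : ℝ≥0∞))
          ≤ ∫⁻ y in {y : Ed d | y ∈ D ∧ δ ≤ pnorm (t - s) (x - y) / 2},
            ENNReal.ofReal (f y) := by
        refine setLIntegral_mono hfmeas.ennreal_ofReal (fun y hy => ?_)
        obtain ⟨hyD, hyp⟩ := hy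
        have hrdef : pnorm (t - s) (x - y) = max a ‖x - y‖ := rfl
        set r : ℝ := max a ‖x - y‖ with hrdef2
        rw [hrdef] at hyp
        have h2δ : 2 * δ ≤ r := by linarith
        have hr0 : 0 < r := lt_of_lt_of_le (by linarith) h2δ
        have hbr : b s ≤ r := max_le (le_max_left _ _) h2δ
        have hKle := hreg t t' s x x' y ht htT ht' ht'T hs hsT hx hx' hyD
          (by rw [hrdef]; linarith)
        have hfy : f y = Cd * r ^ (-p) := min_eq_left
          (mul_le_mul_of_nonneg_left
            (Real.rpow_le_rpow_of_nonpos (hb s) hbr (neg_nonpos.2 hp0.le)) hCd.le)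
        calc (‖K t s x y - K t' s x' y‖₊ : ℝ≥0∞)
            = ENNReal.ofReal ‖K t s x y - K t' s x' y‖ :=
              (ofReal_norm_eq_enorm _).symm
          _ ≤ ENNReal.ofReal (A₀ * δ ^ ε / (pnorm (t - s) (x - y)) ^ p) :=
              ENNReal.ofReal_le_ofReal hKle
          _ = ENNReal.ofReal (f y) := by
              have heq : A₀ * δ ^ ε / (pnorm (t - s) (x - y)) ^ p = f y := by
                rw [hfy, hrdef, hCddef, Real.rpow_neg hr0.le, div_eq_mul_inv]
              rw [heq]
      have step2 : (∫⁻ y in {y : Ed d | y ∈ D ∧ δ ≤ pnorm (t - s) (x - y) / 2},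
          ENNReal.ofReal (f y)) ≤ ∫⁻ y, ENNReal.ofReal (f y) :=
        lintegral_mono' Measure.restrict_le_self le_rfl
      have step3 : (∫⁻ y, ENNReal.ofReal (f y))
          ≤ ENNReal.ofReal ((κ * Cd ^ q1) * M ^ (1 - q1) / (1 - q1)) := by
        refine layercake_bound volume f hfmeas hf0 M (κ * Cd ^ q1) q1 hM
          (by positivity) hq1lt (fun y => min_le_right _ _) (fun l hl => ?_)
        set R : ℝ := (Cd / l) ^ p⁻¹ with hRdef
        have hR0 : 0 < R := Real.rpow_pos_of_pos (div_pos hCd hl) _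
        have hsub : {y : Ed d | l < f y} ⊆ ball x R := by
          intro y hy
          simp only [mem_setOf_eq] at hy
          have h1 : l < Cd * (max a ‖x - y‖) ^ (-p) :=
            lt_of_lt_of_le hy (min_le_left _ _)
          by_contra hmem
          have hge : R ≤ max a ‖x - y‖ := by
            rw [mem_ball, dist_eq_norm, not_lt] at hmem
            exact le_max_of_le_right (by rw [norm_sub_rev]; exact hmem)
          have h2 : (max a ‖x - y‖) ^ (-p) ≤ R ^ (-p) :=
            Real.rpow_le_rpow_of_nonpos hR0 hge (neg_nonpos.2 hp0.le)
          have hRp : R ^ (-p) = l / Cd := by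
            rw [hRdef, ← Real.rpow_mul (div_pos hCd hl).le]
            have : p⁻¹ * (-p) = -1 := by field_simp
            rw [this, Real.rpow_neg_one, inv_div]
          rw [hRp] at h2
          have : Cd * (max a ‖x - y‖) ^ (-p) ≤ l := by
            calc Cd * (max a ‖x - y‖) ^ (-p) ≤ Cd * (l / Cd) :=
                  mul_le_mul_of_nonneg_left h2 hCd.le
              _ = l := by field_simp
          linarith
        have hball : volume (ball x R) = ENNReal.ofReal (R ^ d) * ENNReal.ofReal κ := by
          rw [Measure.addHaar_ball volume x hR0.le, hκball, finrank_euclideanSpace_fin]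
        have hRd : R ^ d * κ = κ * Cd ^ q1 * l ^ (-q1) := by
          have h1 : R ^ d = Cd ^ q1 * l ^ (-q1) := by
            rw [← Real.rpow_natCast R d, hRdef, ← Real.rpow_mul (div_pos hCd hl).le]
            have he : p⁻¹ * (d:ℝ) = q1 := by rw [hq1def]; ring
            rw [he, Real.div_rpow hCd.le hl.le, Real.rpow_neg hl.le, div_eq_mul_inv]
          rw [h1]; ring
        calc volume {y : Ed d | l < f y} ≤ volume (ball x R) := measure_mono hsub
          _ = ENNReal.ofReal (R ^ d * κ) := by
              rw [hball, ← ENNReal.ofReal_mul (by positivity)]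
          _ = ENNReal.ofReal (κ * Cd ^ q1 * l ^ (-q1)) := by rw [hRd]
      have hGeq : (κ * Cd ^ q1) * M ^ (1 - q1) / (1 - q1) = G s := by
        have hM1 : M ^ (1 - q1) = Cd ^ (1 - q1) * (b s) ^ (-p * (1 - q1)) := by
          rw [hMdef, Real.mul_rpow hCd.le (Real.rpow_nonneg (hb s).le _),
            ← Real.rpow_mul (hb s).le]
        have hexp : -p * (1 - q1) = -(ε + 1) := by
          rw [hq1def]; field_simp; ring
        have hCd' : Cd ^ q1 * Cd ^ (1 - q1) = Cd := by
          rw [← Real.rpow_add hCd]; norm_num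
        rw [hM1, hexp, hGdef, hkdef, hκ'def]
        have hrr : κ * Cd ^ q1 * (Cd ^ (1 - q1) * b s ^ (-(ε + 1))) / (1 - q1)
            = κ / (1 - q1) * (Cd ^ q1 * Cd ^ (1 - q1)) * b s ^ (-(ε + 1)) := by ring
        rw [hrr, hCd']
      exact step1.trans (step2.trans (step3.trans (le_of_eq (by rw [hGeq]))))
    clear_value k b G
    -- outer estimate
    have hGnn : ∀ s, 0 ≤ G s := by
      intro s; rw [hGdef]
      exact mul_nonneg hk.le (Real.rpow_nonneg (hb s).le _)
    have hk2 : 0 < k ^ (2:ℝ) := Real.rpow_pos_of_pos hk 2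
    set F : ℝ → ℝ := fun s => k ^ (2:ℝ) * (max |t - s| (4 * δ^2)) ^ (-(ε+1)) with hFdef
    clear_value F
    have hFmeas : Measurable F := by rw [hFdef]; fun_prop
    have hmax0 : ∀ s : ℝ, 0 < max |t - s| (4 * δ^2) := fun s =>
      lt_of_lt_of_le (by positivity) (le_max_right _ _)
    have hF0 : ∀ s, 0 ≤ F s := by
      intro s; rw [hFdef]
      exact mul_nonneg hk2.le (Real.rpow_nonneg (hmax0 s).le _)
    set q2 : ℝ := 1 / (ε + 1) with hq2def
    clear_value q2
    have hq20 : 0 < q2 := by rw [hq2def]; positivity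
    have hq2lt : q2 < 1 := by
      rw [hq2def, div_lt_one (by linarith)]; linarith
    set M2 : ℝ := k ^ (2:ℝ) * (4 * δ^2) ^ (-(ε+1)) with hM2def
    clear_value M2
    have hM2 : 0 < M2 := by
      rw [hM2def]
      exact mul_pos hk2 (Real.rpow_pos_of_pos (by positivity) _)
    have hFbound : ∀ s, F s ≤ M2 := by
      intro s
      simp only [hFdef, hM2def]
      exact mul_le_mul_of_nonneg_left
        (Real.rpow_le_rpow_of_nonpos (by positivity) (le_max_right _ _) (by linarith))
        hk2.le
    -- G squared equals F
    have hG2F : ∀ s : ℝ, (G s) ^ (2:ℝ) = F s := by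
      intro s
      have hbs2 : (b s)^2 = max |t - s| (4 * δ^2) := by
        simp only [hbdef]
        rcases le_total (Real.sqrt |t - s|) (2 * δ) with h | h
        · have h2 : |t - s| ≤ 4 * δ^2 := by
            have h3 := pow_le_pow_left₀ (Real.sqrt_nonneg |t - s|) h 2
            rw [Real.sq_sqrt (abs_nonneg (t - s)),
              show (2*δ)^2 = 4*δ^2 by ring] at h3
            exact h3
          rw [max_eq_right h, max_eq_right h2]; ring
        · have h2 : 4 * δ^2 ≤ |t - s| := by
            have h3 := pow_le_pow_left₀ (by positivity : (0:ℝ) ≤ 2*δ) h 2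
            rw [Real.sq_sqrt (abs_nonneg (t - s)),
              show (2*δ)^2 = 4*δ^2 by ring] at h3
            exact h3
          rw [max_eq_left h, max_eq_left h2, Real.sq_sqrt (abs_nonneg _)]
      have h3 : (b s ^ (-(ε+1))) ^ (2:ℝ) = (max |t - s| (4 * δ^2)) ^ (-(ε+1)) := by
        rw [← Real.rpow_mul (hb s).le, ← hbs2, ← Real.rpow_natCast (b s) 2,
          ← Real.rpow_mul (hb s).le]
        congr 1
        push_cast
        ring
      simp only [hGdef, hFdef]
      rw [Real.mul_rpow hk.le (Real.rpow_nonneg (hb s).le _), h3]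
    have houter1 : (∫⁻ s in {s : ℝ | 0 < s ∧ ENNReal.ofReal s < T},
        (∫⁻ y in {y : Ed d | y ∈ D ∧ δ ≤ pnorm (t - s) (x - y) / 2},
          (‖K t s x y - K t' s x' y‖₊ : ℝ≥0∞)) ^ (2:ℝ))
        ≤ ∫⁻ s in {s : ℝ | 0 < s ∧ ENNReal.ofReal s < T}, ENNReal.ofReal (F s) := by
      refine setLIntegral_mono hFmeas.ennreal_ofReal (fun s hs => ?_)
      obtain ⟨hs1, hs2⟩ := hs
      calc (∫⁻ y in {y : Ed d | y ∈ D ∧ δ ≤ pnorm (t - s) (x - y) / 2},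
            (‖K t s x y - K t' s x' y‖₊ : ℝ≥0∞)) ^ (2:ℝ)
          ≤ (ENNReal.ofReal (G s)) ^ (2:ℝ) :=
            ENNReal.rpow_le_rpow (hinner s hs1 hs2) (by norm_num)
        _ = ENNReal.ofReal ((G s) ^ (2:ℝ)) :=
            ENNReal.ofReal_rpow_of_nonneg (hGnn s) (by norm_num)
        _ = ENNReal.ofReal (F s) := by rw [hG2F s]
    have houter2 : (∫⁻ s in {s : ℝ | 0 < s ∧ ENNReal.ofReal s < T}, ENNReal.ofReal (F s))
        ≤ ENNReal.ofReal ((2 * (k ^ (2:ℝ)) ^ q2) * M2 ^ (1 - q2) / (1 - q2)) := by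
      refine layercake_bound _ F hFmeas hF0 M2 (2 * (k ^ (2:ℝ)) ^ q2) q2 hM2
        (by positivity) hq2lt hFbound (fun l hl => ?_)
      set R2 : ℝ := (k ^ (2:ℝ) / l) ^ q2 with hR2def
      have hR20 : 0 < R2 := Real.rpow_pos_of_pos (div_pos hk2 hl) _
      have hsub2 : {s : ℝ | l < F s} ⊆ Ioo (t - R2) (t + R2) := by
        intro s hs
        simp only [mem_setOf_eq] at hs
        by_contra hmem
        have habs : R2 ≤ |t - s| := by
          rw [mem_Ioo, not_and_or] at hmem
          rcases hmem with h | h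
          · push_neg at h
            exact le_trans (by linarith) (le_abs_self (t - s))
          · push_neg at h
            exact le_trans (by linarith : R2 ≤ -(t - s)) (neg_le_abs (t - s))
        have hge : R2 ≤ max |t - s| (4 * δ^2) := le_max_of_le_left habs
        have h2 : (max |t - s| (4 * δ^2)) ^ (-(ε+1)) ≤ R2 ^ (-(ε+1)) :=
          Real.rpow_le_rpow_of_nonpos hR20 hge (by linarith)
        have hRp : R2 ^ (-(ε+1)) = l / k ^ (2:ℝ) := by
          rw [hR2def, ← Real.rpow_mul (div_pos hk2 hl).le]
          have he : q2 * (-(ε+1)) = -1 := by rw [hq2def]; field_simp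
          rw [he, Real.rpow_neg_one, inv_div]
        rw [hRp] at h2
        have : F s ≤ l := by
          simp only [hFdef]
          calc k ^ (2:ℝ) * (max |t - s| (4 * δ^2)) ^ (-(ε+1))
              ≤ k ^ (2:ℝ) * (l / k ^ (2:ℝ)) := mul_le_mul_of_nonneg_left h2 hk2.le
            _ = l := by field_simp
        linarith
      have hset : MeasurableSet {s : ℝ | l < F s} := measurableSet_lt measurable_const hFmeas
      have h2R : 2 * R2 = 2 * (k ^ (2:ℝ)) ^ q2 * l ^ (-q2) := by
        rw [hR2def, Real.div_rpow hk2.le hl.le, Real.rpow_neg hl.le, div_eq_mul_inv]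
        ring
      calc (volume.restrict {s : ℝ | 0 < s ∧ ENNReal.ofReal s < T}) {s : ℝ | l < F s}
          ≤ volume {s : ℝ | l < F s} := by
            rw [Measure.restrict_apply hset]
            exact measure_mono inter_subset_left
        _ ≤ volume (Ioo (t - R2) (t + R2)) := measure_mono hsub2
        _ = ENNReal.ofReal (2 * R2) := by rw [Real.volume_Ioo]; congr 1; ring
        _ = ENNReal.ofReal (2 * (k ^ (2:ℝ)) ^ q2 * l ^ (-q2)) := by rw [h2R]
    -- arithmetic: the bound is at most (C*A₀)^2
    have hval : (2 * (k ^ (2:ℝ)) ^ q2) * M2 ^ (1 - q2) / (1 - q2) ≤ (C * A₀)^2 := by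
      have hexp2 : -(ε+1) * (1 - q2) = -ε := by rw [hq2def]; field_simp; ring
      have hM2pow : M2 ^ (1 - q2)
          = (k ^ (2:ℝ)) ^ (1 - q2) * (4 * δ^2) ^ (-ε) := by
        rw [hM2def, Real.mul_rpow hk2.le (Real.rpow_nonneg (by positivity) _),
          ← Real.rpow_mul (by positivity : (0:ℝ) ≤ 4 * δ^2), hexp2]
      have hkq : (k ^ (2:ℝ)) ^ q2 * (k ^ (2:ℝ)) ^ (1 - q2) = k ^ (2:ℝ) := by
        rw [← Real.rpow_add hk2]; norm_num
      have h4split : (4 * δ^2 : ℝ) ^ (-ε) = (4:ℝ) ^ (-ε) * (δ^2) ^ (-ε) :=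
        Real.mul_rpow (by norm_num) (sq_nonneg δ)
      have h41 : (4:ℝ) ^ (-ε) ≤ 1 :=
        Real.rpow_le_one_of_one_le_of_nonpos (by norm_num) (by linarith)
      have hdd : (δ ^ ε) ^ (2:ℝ) * (δ^2) ^ (-ε) = 1 := by
        rw [← Real.rpow_mul hδ.le, ← Real.rpow_natCast δ 2, ← Real.rpow_mul hδ.le,
          ← Real.rpow_add hδ]
        rw [show ε * (2:ℝ) + ((2:ℕ):ℝ) * (-ε) = 0 by push_cast; ring, Real.rpow_zero]
      have hkk : k ^ (2:ℝ) * (δ^2) ^ (-ε) = κ'^2 * A₀^2 := by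
        rw [hkdef, Real.mul_rpow hκ'.le (by positivity),
          Real.mul_rpow hA₀.le (Real.rpow_nonneg hδ0 _)]
        have e1 : κ' ^ (2:ℝ) = κ'^2 := by
          rw [show (2:ℝ) = ((2:ℕ):ℝ) by norm_num, Real.rpow_natCast]
        have e2 : A₀ ^ (2:ℝ) = A₀^2 := by
          rw [show (2:ℝ) = ((2:ℕ):ℝ) by norm_num, Real.rpow_natCast]
        rw [e1, e2]
        calc κ'^2 * (A₀^2 * (δ ^ ε) ^ (2:ℝ)) * (δ^2) ^ (-ε)
            = κ'^2 * A₀^2 * ((δ ^ ε) ^ (2:ℝ) * (δ^2) ^ (-ε)) := by ring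
          _ = κ'^2 * A₀^2 := by rw [hdd]; ring
      have hCsq : (C * A₀)^2 = κ'^2 * (2 * (ε+1) / ε) * A₀^2 := by
        rw [hCdef]
        have hss := Real.sq_sqrt (show (0:ℝ) ≤ 2 * (ε+1) / ε by positivity)
        rw [mul_pow, mul_pow, hss]
      have h1q2 : 1 - q2 = ε / (ε + 1) := by rw [hq2def]; field_simp; ring
      have hpos4 : 0 ≤ (δ^2 : ℝ) ^ (-ε) := Real.rpow_nonneg (sq_nonneg δ) _
      calc (2 * (k ^ (2:ℝ)) ^ q2) * M2 ^ (1 - q2) / (1 - q2)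
          = 2 * (k ^ (2:ℝ)) * ((4:ℝ) ^ (-ε) * (δ^2) ^ (-ε)) / (1 - q2) := by
            rw [hM2pow, h4split]
            rw [show (2 * (k ^ (2:ℝ)) ^ q2) * ((k ^ (2:ℝ)) ^ (1 - q2)
                * ((4:ℝ) ^ (-ε) * (δ^2) ^ (-ε))) / (1 - q2)
              = 2 * ((k ^ (2:ℝ)) ^ q2 * (k ^ (2:ℝ)) ^ (1 - q2))
                * ((4:ℝ) ^ (-ε) * (δ^2) ^ (-ε)) / (1 - q2) by ring, hkq]
        _ ≤ 2 * (k ^ (2:ℝ)) * (1 * (δ^2) ^ (-ε)) / (1 - q2) := by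
            have hnum : 2 * (k ^ (2:ℝ)) * ((4:ℝ) ^ (-ε) * (δ^2) ^ (-ε))
                ≤ 2 * (k ^ (2:ℝ)) * (1 * (δ^2) ^ (-ε)) :=
              mul_le_mul_of_nonneg_left
                (mul_le_mul_of_nonneg_right h41 hpos4) (by positivity)
            exact (div_le_div_iff_of_pos_right (by linarith)).2 hnum
        _ = 2 * (κ'^2 * A₀^2) / (1 - q2) := by
            rw [show 2 * (k ^ (2:ℝ)) * (1 * (δ^2) ^ (-ε)) / (1 - q2)
              = 2 * (k ^ (2:ℝ) * (δ^2) ^ (-ε)) / (1 - q2) by ring, hkk]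
        _ = (C * A₀)^2 := by
            rw [hCsq, h1q2]
            field_simp
      -- end hval
    have hsum : (∫⁻ s in {s : ℝ | 0 < s ∧ ENNReal.ofReal s < T},
        (∫⁻ y in {y : Ed d | y ∈ D ∧ δ ≤ pnorm (t - s) (x - y) / 2},
          (‖K t s x y - K t' s x' y‖₊ : ℝ≥0∞)) ^ (2:ℝ))
        ≤ ENNReal.ofReal ((C * A₀)^2) :=
      houter1.trans (houter2.trans (ENNReal.ofReal_le_ofReal hval))
    calc (∫⁻ s in {s : ℝ | 0 < s ∧ ENNReal.ofReal s < T},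
        (∫⁻ y in {y : Ed d | y ∈ D ∧ δ ≤ pnorm (t - s) (x - y) / 2},
          (‖K t s x y - K t' s x' y‖₊ : ℝ≥0∞)) ^ (2:ℝ)) ^ ((1:ℝ)/2)
        ≤ (ENNReal.ofReal ((C * A₀)^2)) ^ ((1:ℝ)/2) :=
          ENNReal.rpow_le_rpow hsum (by norm_num)
      _ = ENNReal.ofReal (C * A₀) := by
          have h1 : ENNReal.ofReal ((C * A₀)^2) = (ENNReal.ofReal (C * A₀)) ^ (2:ℝ) := by
            rw [ENNReal.ofReal_rpow_of_nonneg (mul_pos hC hA₀).le (by norm_num : (0:ℝ) ≤ 2)]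
            congr 1
            rw [show (2:ℝ) = ((2:ℕ):ℝ) by norm_num, Real.rpow_natCast]
          rw [h1, ← ENNReal.rpow_mul]
          norm_num
end
end
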